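/- arXiv:1007.4678 — 4 statements merged into one kernel-verified Lean document; each statement's English description precedes it below -/
import Mathlib

section
/- Let H be a connected graded commutative Hopf algebra over ℂ and let K be the field of convergent Laurent series in a variable z (or any commutative ℂ-algebra equipped with a splitting K = K_- ⊕ K_+ into subalgebras, with K_+ the holomorphic part). Then every ℂ-algebra homomorphism γ : H → K admits a Birkhoff decomposition γ = (γ_- ∘ S) ⋆ γ_+ in the convolution product, where γ_± : H → ℂ ⊕ K_± are algebra homomorphisms, γ_-(Γ) ∈ K_- for Γ in the augmentation ideal, and γ_+ takes values in K_+. The decomposition is constructed recursively by γ_-(Γ) = -π(γ(Γ) + Σ γ_-(γ')γ(γ'')) and γ_+(Γ) = (1-π)(γ(Γ) + Σ γ_-(γ')γ(γ'')), where π is the projection onto K_- and the sum is over the reduced coproduct. -/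
open TensorProduct

namespace CKaux

variable {H : Type*} [CommRing H] [HopfAlgebra ℂ H]
variable {K : Type*} [CommRing K] [Algebra ℂ K]

/-- Convolution product of linear maps. -/
noncomputable def conv (f g : H →ₗ[ℂ] K) : H →ₗ[ℂ] K :=
  LinearMap.mul' ℂ K ∘ₗ TensorProduct.map f g ∘ₗ Coalgebra.comul

/-- The convolution unit. -/
noncomputable def eK : H →ₗ[ℂ] K := Algebra.linearMap ℂ K ∘ₗ Coalgebra.counit

lemma eK_apply (x : H) : eK (K := K) x = algebraMap ℂ K (Coalgebra.counit x) := rfl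

lemma conv_sum_rep (f g : H →ₗ[ℂ] K) {x : H} {k : ℕ} {a b : Fin k → H}
    (h : Coalgebra.comul (R := ℂ) x = ∑ i, a i ⊗ₜ[ℂ] b i) :
    conv f g x = ∑ i, f (a i) * g (b i) := by
  simp [conv, h, map_sum]

lemma conv_repr {ι : Type*} (f g : H →ₗ[ℂ] K) (x : H) (r : Coalgebra.Repr ℂ x ι) :
    conv f g x = ∑ i ∈ r.index, f (r.left i) * g (r.right i) := by
  simp [conv, ← r.eq, map_sum]

lemma sum_counit_smul_left {x : H} {k : ℕ} {a b : Fin k → H}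
    (h : Coalgebra.comul (R := ℂ) x = ∑ i, a i ⊗ₜ[ℂ] b i) :
    ∑ i, (Coalgebra.counit (R := ℂ) (b i)) • a i = x := by
  have h2 := congrArg (fun t => (TensorProduct.rid ℂ H)
    ((LinearMap.lTensor H (Coalgebra.counit (R := ℂ))) t)) h
  simpa [map_sum, TensorProduct.smul_tmul'] using h2.symm

lemma sum_counit_smul_right {x : H} {k : ℕ} {a b : Fin k → H}
    (h : Coalgebra.comul (R := ℂ) x = ∑ i, a i ⊗ₜ[ℂ] b i) :
    ∑ i, (Coalgebra.counit (R := ℂ) (a i)) • b i = x := by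
  have h2 := congrArg (fun t => (TensorProduct.lid ℂ H)
    ((LinearMap.rTensor H (Coalgebra.counit (R := ℂ))) t)) h
  simpa [map_sum] using h2.symm

lemma conv_eK_left (f : H →ₗ[ℂ] K) : conv eK f = f := by
  ext x
  set r := Coalgebra.Repr.arbitrary ℂ x
  rw [conv_repr eK f x r]
  have h1 := Coalgebra.sum_counit_tmul_map_eq (R := ℂ) f x (repr := r)
  have h2 := congrArg (TensorProduct.lid ℂ K) h1
  simp only [map_sum, TensorProduct.lid_tmul, one_smul] at h2
  refine Eq.trans ?_ h2
  exact Finset.sum_congr rfl fun i _ => by rw [eK_apply, Algebra.smul_def]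

lemma conv_eK_right (f : H →ₗ[ℂ] K) : conv f eK = f := by
  ext x
  set r := Coalgebra.Repr.arbitrary ℂ x
  rw [conv_repr f eK x r]
  have h1 := Coalgebra.sum_map_tmul_counit_eq (R := ℂ) f x (repr := r)
  have h2 := congrArg (TensorProduct.rid ℂ K) h1
  simp only [map_sum, TensorProduct.rid_tmul, one_smul] at h2
  refine Eq.trans ?_ h2
  exact Finset.sum_congr rfl fun i _ => by
    rw [eK_apply, Algebra.smul_def, ← Algebra.commutes]

lemma conv_add_left (f g h : H →ₗ[ℂ] K) : conv (f + g) h = conv f h + conv g h := by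
  ext x
  set r := Coalgebra.Repr.arbitrary ℂ x
  simp [conv_repr _ _ x r, add_mul, Finset.sum_add_distrib]

lemma conv_add_right (f g h : H →ₗ[ℂ] K) : conv f (g + h) = conv f g + conv f h := by
  ext x
  set r := Coalgebra.Repr.arbitrary ℂ x
  simp [conv_repr _ _ x r, mul_add, Finset.sum_add_distrib]

lemma conv_assoc (f g h : H →ₗ[ℂ] K) : conv (conv f g) h = conv f (conv g h) := by
  ext x
  set r := Coalgebra.Repr.arbitrary ℂ x
  set a₁ : (i : H × H) → Coalgebra.Repr ℂ (r.left i) (H × H) := fun i => Coalgebra.Repr.arbitrary ℂ _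
  set a₂ : (i : H × H) → Coalgebra.Repr ℂ (r.right i) (H × H) := fun i => Coalgebra.Repr.arbitrary ℂ _
  have key := Coalgebra.sum_map_tmul_tmul_eq (R := ℂ) f g h x (repr := r) (a₁ := a₁) (a₂ := a₂)
  have key2 := congrArg (LinearMap.mul' ℂ K ∘ₗ LinearMap.lTensor K (LinearMap.mul' ℂ K)) key
  simp only [map_sum, LinearMap.comp_apply, LinearMap.lTensor_tmul, LinearMap.mul'_apply] at key2
  rw [conv_repr (conv f g) h x r, conv_repr f (conv g h) x r]
  calc ∑ i ∈ r.index, conv f g (r.left i) * h (r.right i)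
      = ∑ i ∈ r.index, ∑ j ∈ (a₁ i).index,
          f ((a₁ i).left j) * (g ((a₁ i).right j) * h (r.right i)) := by
        refine Finset.sum_congr rfl fun i _ => ?_
        rw [conv_repr f g _ (a₁ i), Finset.sum_mul]
        exact Finset.sum_congr rfl fun j _ => (mul_assoc _ _ _)
    _ = ∑ i ∈ r.index, ∑ j ∈ (a₂ i).index,
          f (r.left i) * (g ((a₂ i).left j) * h ((a₂ i).right j)) := key2.symm
    _ = ∑ i ∈ r.index, f (r.left i) * conv g h (r.right i) := by
        refine Finset.sum_congr rfl fun i _ => ?_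
        rw [conv_repr g h _ (a₂ i), Finset.mul_sum]

section Graded
variable (ℬ : ℕ → Submodule ℂ H)

/-- `t` admits a homogeneous representation of total degree `n`. -/
def IsRep (n : ℕ) (t : H ⊗[ℂ] H) : Prop :=
  ∃ (k : ℕ) (p q : Fin k → ℕ) (a b : Fin k → H),
    (∀ i, p i + q i = n) ∧ (∀ i, a i ∈ ℬ (p i)) ∧ (∀ i, b i ∈ ℬ (q i)) ∧
    t = ∑ i, a i ⊗ₜ[ℂ] b i

noncomputable def repSubmodule (n : ℕ) : Submodule ℂ (H ⊗[ℂ] H) where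
  carrier := {t | IsRep ℬ n t}
  zero_mem' := ⟨0, Fin.elim0, Fin.elim0, Fin.elim0, Fin.elim0,
    fun i => i.elim0, fun i => i.elim0, fun i => i.elim0, by simp⟩
  add_mem' := by
    rintro s t ⟨k, p, q, a, b, hpq, ha, hb, rfl⟩ ⟨k', p', q', a', b', hpq', ha', hb', rfl⟩
    refine ⟨k + k', Fin.append p p', Fin.append q q', Fin.append a a', Fin.append b b',
      fun i => ?_, fun i => ?_, fun i => ?_, ?_⟩
    · induction i using Fin.addCases with
      | left i => simp [Fin.append_left, hpq i]
      | right i => simp [Fin.append_right, hpq' i]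
    · induction i using Fin.addCases with
      | left i => simpa [Fin.append_left] using ha i
      | right i => simpa [Fin.append_right] using ha' i
    · induction i using Fin.addCases with
      | left i => simpa [Fin.append_left] using hb i
      | right i => simpa [Fin.append_right] using hb' i
    · rw [Fin.sum_univ_add]
      simp [Fin.append_left, Fin.append_right]
  smul_mem' := by
    rintro c t ⟨k, p, q, a, b, hpq, ha, hb, rfl⟩
    refine ⟨k, p, q, fun i => c • a i, b, hpq, fun i => (ℬ (p i)).smul_mem c (ha i), hb, ?_⟩
    rw [Finset.smul_sum]
    simp [TensorProduct.smul_tmul']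

lemma comul_isRep
    (hcomul : ∀ n : ℕ, ∀ x ∈ ℬ n,
      Coalgebra.comul (R := ℂ) x ∈
        ⨆ (p : ℕ × ℕ) (_ : p.1 + p.2 = n),
          LinearMap.range (TensorProduct.map (ℬ p.1).subtype (ℬ p.2).subtype))
    {n : ℕ} {x : H} (hx : x ∈ ℬ n) : IsRep ℬ n (Coalgebra.comul (R := ℂ) x) := by
  have hle : (⨆ (p : ℕ × ℕ) (_ : p.1 + p.2 = n),
      LinearMap.range (TensorProduct.map (ℬ p.1).subtype (ℬ p.2).subtype)) ≤
      repSubmodule ℬ n := by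
    refine iSup_le fun p => iSup_le fun hp => ?_
    rw [TensorProduct.range_map_eq_span_tmul, Submodule.span_le]
    rintro t ⟨u, v, rfl⟩
    exact ⟨1, fun _ => p.1, fun _ => p.2, fun _ => (u : H), fun _ => (v : H),
      fun _ => hp, fun _ => u.2, fun _ => v.2, by simp⟩
  exact hle (hcomul n x hx)

variable (hinternal : DirectSum.IsInternal ℬ)

noncomputable def proj (m : ℕ) : H →ₗ[ℂ] H :=
  ((ℬ m).subtype.comp (DFinsupp.lapply m)).comp
    (LinearEquiv.ofBijective (DirectSum.coeLinearMap ℬ) hinternal).symm.toLinearMap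

lemma proj_of_mem {m : ℕ} {x : H} (hx : x ∈ ℬ m) : proj ℬ hinternal m x = x := by
  simp only [proj, LinearMap.comp_apply, LinearEquiv.coe_coe, Submodule.coe_subtype]
  exact congrArg Subtype.val (hinternal.ofBijective_coeLinearMap_of_mem hx)

lemma proj_of_mem_ne {m n : ℕ} (hmn : n ≠ m) {x : H} (hx : x ∈ ℬ n) :
    proj ℬ hinternal m x = 0 := by
  simp only [proj, LinearMap.comp_apply, LinearEquiv.coe_coe, Submodule.coe_subtype]
  exact congrArg Subtype.val (hinternal.ofBijective_coeLinearMap_of_mem_ne hmn hx)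

lemma counit_eq_zero (hinternal : DirectSum.IsInternal ℬ)
    (hcomul : ∀ n : ℕ, ∀ x ∈ ℬ n,
      Coalgebra.comul (R := ℂ) x ∈
        ⨆ (p : ℕ × ℕ) (_ : p.1 + p.2 = n),
          LinearMap.range (TensorProduct.map (ℬ p.1).subtype (ℬ p.2).subtype))
    (n : ℕ) (hn : 0 < n) : ∀ x ∈ ℬ n, Coalgebra.counit (R := ℂ) x = 0 := by
  induction n using Nat.strong_induction_on with
  | _ n IH =>
  intro x hx
  classical
  obtain ⟨k, p, q, a, b, hpq, ha, hb, heq⟩ := comul_isRep ℬ hcomul hx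
  have hx1 : ∑ i, (Coalgebra.counit (R := ℂ) (b i)) • a i = x := sum_counit_smul_left heq
  have hx2 : ∑ i, (Coalgebra.counit (R := ℂ) (a i)) • b i = x := sum_counit_smul_right heq
  have hproj0 : proj ℬ hinternal 0 x = 0 :=
    proj_of_mem_ne ℬ hinternal (Nat.pos_iff_ne_zero.mp hn) hx
  -- A = 0
  have hA : ∑ i ∈ Finset.univ.filter (fun i => p i = 0),
      Coalgebra.counit (R := ℂ) (b i) * Coalgebra.counit (R := ℂ) (a i) = 0 := by
    have h1 := congrArg (proj ℬ hinternal 0) hx1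
    rw [map_sum, hproj0] at h1
    have h2 : ∀ i, proj ℬ hinternal 0 ((Coalgebra.counit (R := ℂ) (b i)) • a i)
        = if p i = 0 then (Coalgebra.counit (R := ℂ) (b i)) • a i else 0 := by
      intro i
      rw [map_smul]
      by_cases hp : p i = 0
      · rw [if_pos hp, proj_of_mem ℬ hinternal (hp ▸ ha i)]
      · rw [if_neg hp, proj_of_mem_ne ℬ hinternal hp (ha i), smul_zero]
    rw [Finset.sum_congr rfl (fun i _ => h2 i), ← Finset.sum_filter] at h1
    have h3 := congrArg (Coalgebra.counit (R := ℂ)) h1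
    rw [map_sum, map_zero] at h3
    rw [← h3]
    exact Finset.sum_congr rfl fun i _ => by rw [map_smul, smul_eq_mul]
  -- B = 0
  have hB : ∑ i ∈ Finset.univ.filter (fun i => q i = 0),
      Coalgebra.counit (R := ℂ) (a i) * Coalgebra.counit (R := ℂ) (b i) = 0 := by
    have h1 := congrArg (proj ℬ hinternal 0) hx2
    rw [map_sum, hproj0] at h1
    have h2 : ∀ i, proj ℬ hinternal 0 ((Coalgebra.counit (R := ℂ) (a i)) • b i)
        = if q i = 0 then (Coalgebra.counit (R := ℂ) (a i)) • b i else 0 := by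
      intro i
      rw [map_smul]
      by_cases hq : q i = 0
      · rw [if_pos hq, proj_of_mem ℬ hinternal (hq ▸ hb i)]
      · rw [if_neg hq, proj_of_mem_ne ℬ hinternal hq (hb i), smul_zero]
    rw [Finset.sum_congr rfl (fun i _ => h2 i), ← Finset.sum_filter] at h1
    have h3 := congrArg (Coalgebra.counit (R := ℂ)) h1
    rw [map_sum, map_zero] at h3
    rw [← h3]
    exact Finset.sum_congr rfl fun i _ => by rw [map_smul, smul_eq_mul]
  -- total
  have htot : Coalgebra.counit (R := ℂ) x
      = ∑ i, Coalgebra.counit (R := ℂ) (a i) * Coalgebra.counit (R := ℂ) (b i) := by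
    conv_lhs => rw [← hx2]
    rw [map_sum]
    exact Finset.sum_congr rfl fun i _ => by rw [map_smul, smul_eq_mul]
  rw [htot]
  rw [← Finset.sum_filter_add_sum_filter_not Finset.univ (fun i => p i = 0)]
  have hPzero : ∑ i ∈ Finset.univ.filter (fun i => p i = 0),
      Coalgebra.counit (R := ℂ) (a i) * Coalgebra.counit (R := ℂ) (b i) = 0 := by
    rw [← hA]
    exact Finset.sum_congr rfl fun i _ => mul_comm _ _
  rw [hPzero, zero_add]
  rw [← Finset.sum_filter_add_sum_filter_not
    (Finset.univ.filter (fun i => ¬ p i = 0)) (fun i => q i = 0)]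
  have hsetQ : (Finset.univ.filter (fun i => ¬ p i = 0)).filter (fun i => q i = 0)
      = Finset.univ.filter (fun i => q i = 0) := by
    rw [Finset.filter_filter]
    refine Finset.filter_congr fun i _ => ?_
    constructor
    · exact fun h => h.2
    · intro hqi
      refine ⟨fun hpi => ?_, hqi⟩
      have := hpq i
      omega
  rw [hsetQ, hB, zero_add]
  refine Finset.sum_eq_zero fun i hi => ?_
  simp only [Finset.mem_filter] at hi
  have hplt : p i < n := by have := hpq i; omega
  have hppos : 0 < p i := Nat.pos_of_ne_zero hi.1.2
  rw [IH (p i) hplt hppos (a i) (ha i), zero_mul]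

end Graded

section KSide
variable {K : Type*} [CommRing K] [Algebra ℂ K]
variable (Kneg Kpos : Submodule ℂ K)

noncomputable def piL (hsplit : IsCompl Kneg Kpos) : K →ₗ[ℂ] K :=
  Kneg.subtype ∘ₗ Kneg.linearProjOfIsCompl Kpos hsplit

lemma piL_mem_neg (hsplit : IsCompl Kneg Kpos) (x : K) : piL Kneg Kpos hsplit x ∈ Kneg :=
  (Kneg.linearProjOfIsCompl Kpos hsplit x).2

lemma piL_of_neg (hsplit : IsCompl Kneg Kpos) {x : K} (hx : x ∈ Kneg) :
    piL Kneg Kpos hsplit x = x :=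
  congrArg Subtype.val (Submodule.linearProjOfIsCompl_apply_left hsplit ⟨x, hx⟩)

lemma piL_of_pos (hsplit : IsCompl Kneg Kpos) {x : K} (hx : x ∈ Kpos) :
    piL Kneg Kpos hsplit x = 0 :=
  congrArg Subtype.val (Submodule.linearProjOfIsCompl_apply_right hsplit ⟨x, hx⟩)

lemma exists_decomp (hsplit : IsCompl Kneg Kpos) (x : K) :
    ∃ u ∈ Kneg, ∃ v ∈ Kpos, x = u + v := by
  have htop : Kneg ⊔ Kpos = ⊤ := codisjoint_iff.mp hsplit.codisjoint
  have hx : x ∈ Kneg ⊔ Kpos := htop ▸ Submodule.mem_top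
  obtain ⟨u, hu, v, hv, huv⟩ := Submodule.mem_sup.mp hx
  exact ⟨u, hu, v, hv, huv.symm⟩

lemma sub_piL_mem_pos (hsplit : IsCompl Kneg Kpos) (x : K) :
    x - piL Kneg Kpos hsplit x ∈ Kpos := by
  obtain ⟨u, hu, v, hv, rfl⟩ := exists_decomp Kneg Kpos hsplit x
  rw [map_add, piL_of_neg Kneg Kpos hsplit hu, piL_of_pos Kneg Kpos hsplit hv]
  simpa using hv

lemma rota_baxter (hsplit : IsCompl Kneg Kpos)
    (hKnegMul : ∀ x ∈ Kneg, ∀ y ∈ Kneg, x * y ∈ Kneg)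
    (hKposMul : ∀ x ∈ Kpos, ∀ y ∈ Kpos, x * y ∈ Kpos)
    (a b : K) :
    piL Kneg Kpos hsplit (piL Kneg Kpos hsplit a * b)
      + piL Kneg Kpos hsplit (a * piL Kneg Kpos hsplit b)
      - piL Kneg Kpos hsplit (a * b)
    = piL Kneg Kpos hsplit a * piL Kneg Kpos hsplit b := by
  set π := piL Kneg Kpos hsplit with hπ
  set a2 := a - π a with ha2
  set b2 := b - π b with hb2
  have ha : a = π a + a2 := by rw [ha2]; ring
  have hb : b = π b + b2 := by rw [hb2]; ring
  have ha2m : a2 ∈ Kpos := sub_piL_mem_pos Kneg Kpos hsplit a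
  have hb2m : b2 ∈ Kpos := sub_piL_mem_pos Kneg Kpos hsplit b
  have h11 : π (π a * π b) = π a * π b :=
    piL_of_neg Kneg Kpos hsplit
      (hKnegMul _ (piL_mem_neg Kneg Kpos hsplit a) _ (piL_mem_neg Kneg Kpos hsplit b))
  have h22 : π (a2 * b2) = 0 := piL_of_pos Kneg Kpos hsplit (hKposMul _ ha2m _ hb2m)
  have e1 : π a * b = π a * π b + π a * b2 := by rw [hb2]; ring
  have e2 : a * π b = π a * π b + a2 * π b := by rw [ha2]; ring
  have e3 : a * b = π a * π b + (π a * b2 + (a2 * π b + a2 * b2)) := by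
    conv_lhs => rw [ha, hb]
    ring
  rw [e1, e2, e3, map_add, map_add, map_add, map_add, map_add, h11, h22]
  ring

end KSide

section Recursion
variable {K : Type*} [CommRing K] [Algebra ℂ K]
variable (ℬ : ℕ → Submodule ℂ H)
variable (Kneg Kpos : Submodule ℂ K)
variable (γ : H →ₐ[ℂ] K)

/-- `ρ = γ - e`. -/
noncomputable def rho : H →ₗ[ℂ] K := γ.toLinearMap - eK

lemma rho_apply (x : H) : rho γ x = γ x - algebraMap ℂ K (Coalgebra.counit x) := rfl

lemma rho_one_mem (hconn : ℬ 0 = 1) {x : H} (hx : x ∈ ℬ 0) : rho γ x = 0 := by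
  rw [hconn] at hx
  obtain ⟨c, rfl⟩ := Submodule.mem_one.mp hx
  rw [rho_apply, AlgHom.commutes, Bialgebra.counit_algebraMap, sub_self]

/-- The Bogoliubov recursion operator. -/
noncomputable def Tmap (hsplit : IsCompl Kneg Kpos) (f : H →ₗ[ℂ] K) : H →ₗ[ℂ] K :=
  -(piL Kneg Kpos hsplit ∘ₗ (rho γ + conv f (rho γ)))

lemma Tmap_apply (hsplit : IsCompl Kneg Kpos) (f : H →ₗ[ℂ] K) (x : H) :
    Tmap Kneg Kpos γ hsplit f x
      = -piL Kneg Kpos hsplit (rho γ x + conv f (rho γ) x) := rfl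

noncomputable def Fseq (hsplit : IsCompl Kneg Kpos) : ℕ → (H →ₗ[ℂ] K)
  | 0 => 0
  | (k + 1) => Tmap Kneg Kpos γ hsplit (Fseq hsplit k)

/-- Key locality lemma: `conv f ρ` on `ℬ n` only depends on `f` below degree `n`. -/
lemma conv_rho_congr (hconn : ℬ 0 = 1)
    (hcomul : ∀ n : ℕ, ∀ x ∈ ℬ n,
      Coalgebra.comul (R := ℂ) x ∈
        ⨆ (p : ℕ × ℕ) (_ : p.1 + p.2 = n),
          LinearMap.range (TensorProduct.map (ℬ p.1).subtype (ℬ p.2).subtype))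
    {n : ℕ} {x : H} (hx : x ∈ ℬ n) (f g : H →ₗ[ℂ] K)
    (hfg : ∀ p < n, ∀ y ∈ ℬ p, f y = g y) :
    conv f (rho γ) x = conv g (rho γ) x := by
  obtain ⟨k, p, q, a, b, hpq, ha, hb, heq⟩ := comul_isRep ℬ hcomul hx
  rw [conv_sum_rep _ _ heq, conv_sum_rep _ _ heq]
  refine Finset.sum_congr rfl fun i _ => ?_
  by_cases hq : q i = 0
  · rw [rho_one_mem ℬ γ hconn (hq ▸ hb i), mul_zero, mul_zero]
  · have hp : p i < n := by have := hpq i; omega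
    rw [hfg (p i) hp (a i) (ha i)]

lemma Fseq_stab (hconn : ℬ 0 = 1)
    (hcomul : ∀ n : ℕ, ∀ x ∈ ℬ n,
      Coalgebra.comul (R := ℂ) x ∈
        ⨆ (p : ℕ × ℕ) (_ : p.1 + p.2 = n),
          LinearMap.range (TensorProduct.map (ℬ p.1).subtype (ℬ p.2).subtype))
    (hsplit : IsCompl Kneg Kpos) :
    ∀ n : ℕ, ∀ x ∈ ℬ n, ∀ k, n + 1 ≤ k →
      Fseq Kneg Kpos γ hsplit k x = Fseq Kneg Kpos γ hsplit (n + 1) x := by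
  intro n
  induction n using Nat.strong_induction_on with
  | _ n IH =>
  intro x hx k hk
  induction k, hk using Nat.le_induction with
  | base => rfl
  | succ k hk IHk =>
  show Tmap Kneg Kpos γ hsplit (Fseq Kneg Kpos γ hsplit k) x
      = Tmap Kneg Kpos γ hsplit (Fseq Kneg Kpos γ hsplit n) x
  rw [Tmap_apply, Tmap_apply]
  rw [conv_rho_congr ℬ γ hconn hcomul hx (Fseq Kneg Kpos γ hsplit k)
    (Fseq Kneg Kpos γ hsplit n) ?_]
  intro p hp y hy
  rw [IH p hp y hy k (by omega), IH p hp y hy n (by omega)]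

variable (hinternal : DirectSum.IsInternal ℬ)

noncomputable def delta (hinternal : DirectSum.IsInternal ℬ) (hsplit : IsCompl Kneg Kpos) :
    H →ₗ[ℂ] K :=
  (DirectSum.toModule ℂ ℕ K (fun n => (Fseq Kneg Kpos γ hsplit (n + 1)) ∘ₗ (ℬ n).subtype)) ∘ₗ
    (LinearEquiv.ofBijective (DirectSum.coeLinearMap ℬ) hinternal).symm.toLinearMap

lemma delta_apply_mem (hinternal : DirectSum.IsInternal ℬ) (hsplit : IsCompl Kneg Kpos)
    {n : ℕ} {x : H} (hx : x ∈ ℬ n) :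
    delta ℬ Kneg Kpos γ hinternal hsplit x = Fseq Kneg Kpos γ hsplit (n + 1) x := by
  have hsymm : (LinearEquiv.ofBijective (DirectSum.coeLinearMap ℬ) hinternal).symm x
      = DirectSum.lof ℂ ℕ (fun i => ℬ i) n ⟨x, hx⟩ := by
    rw [LinearEquiv.symm_apply_eq]
    show x = DirectSum.coeLinearMap ℬ (DirectSum.lof ℂ ℕ (fun i => ℬ i) n ⟨x, hx⟩)
    rw [DirectSum.lof_eq_of, DirectSum.coeLinearMap_of]
  simp only [delta, LinearMap.comp_apply, LinearEquiv.coe_coe, hsymm, DirectSum.toModule_lof]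
  rfl

lemma delta_fixed (hconn : ℬ 0 = 1)
    (hcomul : ∀ n : ℕ, ∀ x ∈ ℬ n,
      Coalgebra.comul (R := ℂ) x ∈
        ⨆ (p : ℕ × ℕ) (_ : p.1 + p.2 = n),
          LinearMap.range (TensorProduct.map (ℬ p.1).subtype (ℬ p.2).subtype))
    (hsplit : IsCompl Kneg Kpos) (x : H) :
    delta ℬ Kneg Kpos γ hinternal hsplit x
      = Tmap Kneg Kpos γ hsplit (delta ℬ Kneg Kpos γ hinternal hsplit) x := by
  set δ := delta ℬ Kneg Kpos γ hinternal hsplit with hδ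
  have hmem : ∀ n : ℕ, ∀ y ∈ ℬ n, δ y = Tmap Kneg Kpos γ hsplit δ y := by
    intro n y hy
    rw [hδ, delta_apply_mem ℬ Kneg Kpos γ hinternal hsplit hy]
    show Tmap Kneg Kpos γ hsplit (Fseq Kneg Kpos γ hsplit n) y = _
    rw [Tmap_apply, Tmap_apply]
    rw [conv_rho_congr ℬ γ hconn hcomul hy (Fseq Kneg Kpos γ hsplit n) δ ?_]
    intro p hp z hz
    rw [hδ, delta_apply_mem ℬ Kneg Kpos γ hinternal hsplit hz,
      Fseq_stab ℬ Kneg Kpos γ hconn hcomul hsplit p z hz n (by omega)]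
  have hx : x ∈ (⊤ : Submodule ℂ H) := Submodule.mem_top
  rw [← hinternal.submodule_iSup_eq_top] at hx
  set P : Submodule ℂ H :=
    { carrier := {y | δ y = Tmap Kneg Kpos γ hsplit δ y}
      zero_mem' := by simp
      add_mem' := fun {u v} hu hv => by
        simp only [Set.mem_setOf_eq, map_add] at *
        rw [hu, hv]
      smul_mem' := fun c {u} hu => by
        simp only [Set.mem_setOf_eq, map_smul] at *
        rw [hu] } with hP
  have : (⨆ n, ℬ n) ≤ P := iSup_le fun n y hy => hmem n y hy
  exact this hx

end Recursion

section Mult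
variable {K : Type*} [CommRing K] [Algebra ℂ K]
variable (ℬ : ℕ → Submodule ℂ H)
variable (Kneg Kpos : Submodule ℂ K)
variable (γ : H →ₐ[ℂ] K)

lemma conv_sum_gen (f g : H →ₗ[ℂ] K) {x : H} {ι : Type*} (s : Finset ι) (a b : ι → H)
    (h : Coalgebra.comul (R := ℂ) x = ∑ i ∈ s, a i ⊗ₜ[ℂ] b i) :
    conv f g x = ∑ i ∈ s, f (a i) * g (b i) := by
  simp [conv, h, map_sum]

lemma conv_zero_left (f : H →ₗ[ℂ] K) : conv 0 f = 0 := by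
  ext x
  set r := Coalgebra.Repr.arbitrary ℂ x
  simp [conv_repr _ _ x r]

noncomputable def Wmap (hinternal : DirectSum.IsInternal ℬ) (hsplit : IsCompl Kneg Kpos) :
    H →ₗ[ℂ] K :=
  rho γ + conv (delta ℬ Kneg Kpos γ hinternal hsplit) (rho γ)

noncomputable def gammaL (hinternal : DirectSum.IsInternal ℬ) (hsplit : IsCompl Kneg Kpos) :
    H →ₗ[ℂ] K :=
  eK + delta ℬ Kneg Kpos γ hinternal hsplit

lemma delta_eq_neg_piL_W (hinternal : DirectSum.IsInternal ℬ) (hconn : ℬ 0 = 1)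
    (hcomul : ∀ n : ℕ, ∀ x ∈ ℬ n,
      Coalgebra.comul (R := ℂ) x ∈
        ⨆ (p : ℕ × ℕ) (_ : p.1 + p.2 = n),
          LinearMap.range (TensorProduct.map (ℬ p.1).subtype (ℬ p.2).subtype))
    (hsplit : IsCompl Kneg Kpos) (x : H) :
    delta ℬ Kneg Kpos γ hinternal hsplit x
      = -piL Kneg Kpos hsplit (Wmap ℬ Kneg Kpos γ hinternal hsplit x) := by
  rw [delta_fixed ℬ Kneg Kpos γ hinternal hconn hcomul hsplit x, Tmap_apply]
  rfl

lemma gammaL_one (hinternal : DirectSum.IsInternal ℬ) (hconn : ℬ 0 = 1)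
    (hsplit : IsCompl Kneg Kpos) :
    gammaL ℬ Kneg Kpos γ hinternal hsplit 1 = 1 := by
  have h1 : (1 : H) ∈ ℬ 0 := by
    rw [hconn]; exact Submodule.mem_one.mpr ⟨1, map_one _⟩
  have hδ : delta ℬ Kneg Kpos γ hinternal hsplit 1 = 0 := by
    rw [delta_apply_mem ℬ Kneg Kpos γ hinternal hsplit h1]
    show Tmap Kneg Kpos γ hsplit (Fseq Kneg Kpos γ hsplit 0) 1 = 0
    rw [Tmap_apply]
    show -piL Kneg Kpos hsplit (rho γ 1 + conv 0 (rho γ) 1) = 0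
    rw [conv_zero_left, rho_one_mem ℬ γ hconn h1]
    simp
  show eK 1 + delta ℬ Kneg Kpos γ hinternal hsplit 1 = 1
  rw [hδ, add_zero, eK_apply, Bialgebra.counit_one, map_one]

lemma gammaL_conv_eq (hinternal : DirectSum.IsInternal ℬ) (hsplit : IsCompl Kneg Kpos) :
    conv (gammaL ℬ Kneg Kpos γ hinternal hsplit) γ.toLinearMap
      = gammaL ℬ Kneg Kpos γ hinternal hsplit + Wmap ℬ Kneg Kpos γ hinternal hsplit := by
  set δ := delta ℬ Kneg Kpos γ hinternal hsplit
  have hγ : γ.toLinearMap = eK + rho γ := by rw [rho]; abel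
  rw [gammaL, hγ, conv_add_left, conv_add_right, conv_add_right, conv_eK_left, conv_eK_left,
    conv_eK_right]
  rw [Wmap]
  abel

lemma gammaL_mul_homog (hinternal : DirectSum.IsInternal ℬ) (hconn : ℬ 0 = 1)
    (hmul : ∀ m n : ℕ, ∀ x ∈ ℬ m, ∀ y ∈ ℬ n, x * y ∈ ℬ (m + n))
    (hcomul : ∀ n : ℕ, ∀ x ∈ ℬ n,
      Coalgebra.comul (R := ℂ) x ∈
        ⨆ (p : ℕ × ℕ) (_ : p.1 + p.2 = n),
          LinearMap.range (TensorProduct.map (ℬ p.1).subtype (ℬ p.2).subtype))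
    (hsplit : IsCompl Kneg Kpos)
    (hKnegMul : ∀ x ∈ Kneg, ∀ y ∈ Kneg, x * y ∈ Kneg)
    (hKposMul : ∀ x ∈ Kpos, ∀ y ∈ Kpos, x * y ∈ Kpos) :
    ∀ N m n : ℕ, m + n = N → ∀ x ∈ ℬ m, ∀ y ∈ ℬ n,
      gammaL ℬ Kneg Kpos γ hinternal hsplit (x * y)
        = gammaL ℬ Kneg Kpos γ hinternal hsplit x
          * gammaL ℬ Kneg Kpos γ hinternal hsplit y := by
  classical
  set δ := delta ℬ Kneg Kpos γ hinternal hsplit with hδdef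
  set π := piL Kneg Kpos hsplit with hπdef
  set gL := gammaL ℬ Kneg Kpos γ hinternal hsplit with hgLdef
  set W := Wmap ℬ Kneg Kpos γ hinternal hsplit with hWdef
  intro N
  induction N using Nat.strong_induction_on with
  | _ N IH =>
  intro m n hmn x hx y hy
  rcases Nat.eq_zero_or_pos m with hm | hm
  · -- x has degree 0
    subst hm
    rw [hconn] at hx
    obtain ⟨c, rfl⟩ := Submodule.mem_one.mp hx
    have h1 : algebraMap ℂ H c * y = c • y := (Algebra.smul_def c y).symm
    have h2 : algebraMap ℂ H c = c • (1 : H) := Algebra.algebraMap_eq_smul_one c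
    rw [h1, h2, map_smul, map_smul, gammaL_one ℬ Kneg Kpos γ hinternal hconn hsplit,
      smul_mul_assoc, one_mul]
  rcases Nat.eq_zero_or_pos n with hn | hn
  · -- y has degree 0
    subst hn
    rw [hconn] at hy
    obtain ⟨c, rfl⟩ := Submodule.mem_one.mp hy
    have h1 : x * algebraMap ℂ H c = c • x := by
      rw [Algebra.algebraMap_eq_smul_one c, mul_smul_comm, mul_one]
    have h2 : algebraMap ℂ H c = c • (1 : H) := Algebra.algebraMap_eq_smul_one c
    rw [h1, h2, map_smul, map_smul, gammaL_one ℬ Kneg Kpos γ hinternal hconn hsplit,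
      mul_smul_comm, mul_one]
  -- main case : both degrees positive
  have hNpos : 0 < N := by omega
  have hxy : x * y ∈ ℬ N := by
    have := hmul m n x hx y hy
    rwa [hmn] at this
  have hεx : Coalgebra.counit (R := ℂ) x = 0 :=
    counit_eq_zero ℬ hinternal hcomul m hm x hx
  have hεy : Coalgebra.counit (R := ℂ) y = 0 :=
    counit_eq_zero ℬ hinternal hcomul n hn y hy
  have hεxy : Coalgebra.counit (R := ℂ) (x * y) = 0 :=
    counit_eq_zero ℬ hinternal hcomul N hNpos (x * y) hxy
  have hgx : gL x = δ x := by
    show eK x + δ x = δ x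
    rw [eK_apply, hεx, map_zero, zero_add]
  have hgy : gL y = δ y := by
    show eK y + δ y = δ y
    rw [eK_apply, hεy, map_zero, zero_add]
  have hgxy : gL (x * y) = δ (x * y) := by
    show eK (x * y) + δ (x * y) = δ (x * y)
    rw [eK_apply, hεxy, map_zero, zero_add]
  have hδW : ∀ z : H, δ z = -π (W z) :=
    delta_eq_neg_piL_W ℬ Kneg Kpos γ hinternal hconn hcomul hsplit
  -- the crucial combinatorial identity
  obtain ⟨k, p, q, a, b, hpq, ha, hb, heqx⟩ := comul_isRep ℬ hcomul hx
  obtain ⟨k', p', q', c, d, hpq', hc, hd, heqy⟩ := comul_isRep ℬ hcomul hy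
  have heqxy : Coalgebra.comul (R := ℂ) (x * y)
      = ∑ ij : Fin k × Fin k', (a ij.1 * c ij.2) ⊗ₜ[ℂ] (b ij.1 * d ij.2) := by
    rw [Bialgebra.comul_mul, heqx, heqy, Finset.sum_mul_sum, Fintype.sum_prod_type]
    refine Finset.sum_congr rfl fun i _ => Finset.sum_congr rfl fun j _ => ?_
    rw [Algebra.TensorProduct.tmul_mul_tmul]
  have hbtop : ∀ i, q i = 0 → b i = algebraMap ℂ H (Coalgebra.counit (R := ℂ) (b i)) := by
    intro i hqi
    have : b i ∈ (1 : Submodule ℂ H) := by rw [← hconn]; exact hqi ▸ hb i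
    obtain ⟨cc, hcc⟩ := Submodule.mem_one.mp this
    rw [← hcc, Bialgebra.counit_algebraMap]
  have hdtop : ∀ j, q' j = 0 → d j = algebraMap ℂ H (Coalgebra.counit (R := ℂ) (d j)) := by
    intro j hqj
    have : d j ∈ (1 : Submodule ℂ H) := by rw [← hconn]; exact hqj ▸ hd j
    obtain ⟨cc, hcc⟩ := Submodule.mem_one.mp this
    rw [← hcc, Bialgebra.counit_algebraMap]
  have hγb : ∀ i, q i = 0 → γ (b i) = algebraMap ℂ K (Coalgebra.counit (R := ℂ) (b i)) := by
    intro i hqi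
    conv_lhs => rw [hbtop i hqi]
    rw [AlgHom.commutes]
  have hγd : ∀ j, q' j = 0 → γ (d j) = algebraMap ℂ K (Coalgebra.counit (R := ℂ) (d j)) := by
    intro j hqj
    conv_lhs => rw [hdtop j hqj]
    rw [AlgHom.commutes]
  have hxsum : ∑ i ∈ Finset.univ.filter (fun i => q i = 0),
      (Coalgebra.counit (R := ℂ) (b i)) • a i = x := by
    rw [← sum_counit_smul_left heqx,
      ← Finset.sum_filter_add_sum_filter_not Finset.univ (fun i => q i = 0)]
    have : ∑ i ∈ Finset.univ.filter (fun i => ¬ q i = 0),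
        (Coalgebra.counit (R := ℂ) (b i)) • a i = 0 := by
      refine Finset.sum_eq_zero fun i hi => ?_
      simp only [Finset.mem_filter] at hi
      rw [counit_eq_zero ℬ hinternal hcomul (q i) (Nat.pos_of_ne_zero hi.2) (b i) (hb i),
        zero_smul]
    rw [this, add_zero]
  have hysum : ∑ j ∈ Finset.univ.filter (fun j => q' j = 0),
      (Coalgebra.counit (R := ℂ) (d j)) • c j = y := by
    rw [← sum_counit_smul_left heqy,
      ← Finset.sum_filter_add_sum_filter_not Finset.univ (fun j => q' j = 0)]
    have : ∑ j ∈ Finset.univ.filter (fun j => ¬ q' j = 0),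
        (Coalgebra.counit (R := ℂ) (d j)) • c j = 0 := by
      refine Finset.sum_eq_zero fun j hj => ?_
      simp only [Finset.mem_filter] at hj
      rw [counit_eq_zero ℬ hinternal hcomul (q' j) (Nat.pos_of_ne_zero hj.2) (d j) (hd j),
        zero_smul]
    rw [this, add_zero]
  have hfp : Finset.univ.filter (fun ij : Fin k × Fin k' => q ij.1 = 0 ∧ q' ij.2 = 0)
      = (Finset.univ.filter fun i => q i = 0) ×ˢ (Finset.univ.filter fun j => q' j = 0) := by
    ext ⟨i, j⟩
    simp [Finset.mem_filter, Finset.mem_product]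
  have convxy : conv gL γ.toLinearMap (x * y)
      = ∑ ij : Fin k × Fin k', gL (a ij.1 * c ij.2) * γ (b ij.1 * d ij.2) :=
    conv_sum_gen gL γ.toLinearMap Finset.univ _ _ heqxy
  have convx : conv gL γ.toLinearMap x = ∑ i, gL (a i) * γ (b i) :=
    conv_sum_gen gL γ.toLinearMap Finset.univ a b heqx
  have convy : conv gL γ.toLinearMap y = ∑ j, gL (c j) * γ (d j) :=
    conv_sum_gen gL γ.toLinearMap Finset.univ c d heqy
  have convmul : conv gL γ.toLinearMap x * conv gL γ.toLinearMap y
      = ∑ ij : Fin k × Fin k', (gL (a ij.1) * γ (b ij.1)) * (gL (c ij.2) * γ (d ij.2)) := by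
    rw [convx, convy, Finset.sum_mul_sum, Fintype.sum_prod_type]
  have topL : ∑ ij ∈ Finset.univ.filter (fun ij : Fin k × Fin k' => q ij.1 = 0 ∧ q' ij.2 = 0),
      gL (a ij.1 * c ij.2) * γ (b ij.1 * d ij.2) = gL (x * y) := by
    conv_rhs => rw [← hxsum, ← hysum, Finset.sum_mul_sum]
    rw [map_sum, hfp, Finset.sum_product]
    refine Finset.sum_congr rfl fun i hi => ?_
    rw [map_sum]
    refine Finset.sum_congr rfl fun j hj => ?_
    simp only [Finset.mem_filter] at hi hj
    calc gL (a i * c j) * γ (b i * d j)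
        = gL (a i * c j) * (algebraMap ℂ K (Coalgebra.counit (R := ℂ) (b i))
            * algebraMap ℂ K (Coalgebra.counit (R := ℂ) (d j))) := by
          rw [map_mul γ (b i) (d j), hγb i hi.2, hγd j hj.2]
      _ = (Coalgebra.counit (R := ℂ) (b i) * Coalgebra.counit (R := ℂ) (d j))
            • gL (a i * c j) := by
          rw [Algebra.smul_def, map_mul (algebraMap ℂ K) _ _]; ring
      _ = gL ((Coalgebra.counit (R := ℂ) (b i) • a i)
            * (Coalgebra.counit (R := ℂ) (d j) • c j)) := by
          rw [smul_mul_smul_comm, map_smul]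
  have topR : ∑ ij ∈ Finset.univ.filter (fun ij : Fin k × Fin k' => q ij.1 = 0 ∧ q' ij.2 = 0),
      (gL (a ij.1) * γ (b ij.1)) * (gL (c ij.2) * γ (d ij.2)) = gL x * gL y := by
    conv_rhs => rw [← hxsum, ← hysum, map_sum, map_sum, Finset.sum_mul_sum]
    rw [hfp, Finset.sum_product]
    refine Finset.sum_congr rfl fun i hi => ?_
    refine Finset.sum_congr rfl fun j hj => ?_
    simp only [Finset.mem_filter] at hi hj
    calc (gL (a i) * γ (b i)) * (gL (c j) * γ (d j))
        = (gL (a i) * gL (c j)) * (algebraMap ℂ K (Coalgebra.counit (R := ℂ) (b i))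
            * algebraMap ℂ K (Coalgebra.counit (R := ℂ) (d j))) := by
          rw [hγb i hi.2, hγd j hj.2]; ring
      _ = (Coalgebra.counit (R := ℂ) (b i) * Coalgebra.counit (R := ℂ) (d j))
            • (gL (a i) * gL (c j)) := by
          rw [Algebra.smul_def, map_mul (algebraMap ℂ K) _ _]; ring
      _ = gL (Coalgebra.counit (R := ℂ) (b i) • a i)
            * gL (Coalgebra.counit (R := ℂ) (d j) • c j) := by
          rw [map_smul, map_smul, smul_mul_smul_comm]
  have nontop : ∑ ij ∈ Finset.univ.filter
        (fun ij : Fin k × Fin k' => ¬ (q ij.1 = 0 ∧ q' ij.2 = 0)),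
      gL (a ij.1 * c ij.2) * γ (b ij.1 * d ij.2)
      = ∑ ij ∈ Finset.univ.filter
          (fun ij : Fin k × Fin k' => ¬ (q ij.1 = 0 ∧ q' ij.2 = 0)),
        (gL (a ij.1) * γ (b ij.1)) * (gL (c ij.2) * γ (d ij.2)) := by
    refine Finset.sum_congr rfl fun ij hij => ?_
    simp only [Finset.mem_filter, not_and_or] at hij
    have hdeg : p ij.1 + p' ij.2 < N := by
      have h1 := hpq ij.1
      have h2 := hpq' ij.2
      rcases hij.2 with h | h <;> omega
    rw [IH (p ij.1 + p' ij.2) hdeg (p ij.1) (p' ij.2) rfl (a ij.1) (ha ij.1)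
      (c ij.2) (hc ij.2), map_mul γ (b ij.1) (d ij.2)]
    ring
  have crux : conv gL γ.toLinearMap (x * y) + gL x * gL y
      = gL (x * y) + conv gL γ.toLinearMap x * conv gL γ.toLinearMap y := by
    rw [convxy, convmul,
      ← Finset.sum_filter_add_sum_filter_not Finset.univ
        (fun ij : Fin k × Fin k' => q ij.1 = 0 ∧ q' ij.2 = 0)
        (fun ij => gL (a ij.1 * c ij.2) * γ (b ij.1 * d ij.2)),
      ← Finset.sum_filter_add_sum_filter_not Finset.univ
        (fun ij : Fin k × Fin k' => q ij.1 = 0 ∧ q' ij.2 = 0)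
        (fun ij => (gL (a ij.1) * γ (b ij.1)) * (gL (c ij.2) * γ (d ij.2))),
      topL, topR, nontop]
    ring
  -- derive the Bogoliubov identity for W
  have hWconv : ∀ z : H, conv gL γ.toLinearMap z = gL z + W z := by
    intro z
    have := gammaL_conv_eq ℬ Kneg Kpos γ hinternal hsplit
    rw [← hgLdef, ← hWdef] at this
    rw [this]
    rfl
  have hWxy : W (x * y) = gL x * W y + W x * gL y + W x * W y := by
    have h0 := crux
    rw [hWconv (x * y), hWconv x, hWconv y] at h0
    linear_combination h0
  -- Rota-Baxter step
  have hgx' : gL x = -π (W x) := by rw [hgx, hδW x]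
  have hgy' : gL y = -π (W y) := by rw [hgy, hδW y]
  have hexp : W (x * y) = -(π (W x) * W y) + (-(W x * π (W y)) + W x * W y) := by
    rw [hWxy, hgx', hgy']
    ring
  have hrb := rota_baxter Kneg Kpos hsplit hKnegMul hKposMul (W x) (W y)
  rw [← hπdef] at hrb
  rw [hgxy, hδW (x * y), hexp, map_add, map_add, map_neg, map_neg, hgx', hgy']
  linear_combination hrb

end Mult

section Final
variable {K : Type*} [CommRing K] [Algebra ℂ K]
variable (ℬ : ℕ → Submodule ℂ H)
variable (Kneg Kpos : Submodule ℂ K)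
variable (γ : H →ₐ[ℂ] K)

lemma gammaL_mul (hinternal : DirectSum.IsInternal ℬ) (hconn : ℬ 0 = 1)
    (hmul : ∀ m n : ℕ, ∀ x ∈ ℬ m, ∀ y ∈ ℬ n, x * y ∈ ℬ (m + n))
    (hcomul : ∀ n : ℕ, ∀ x ∈ ℬ n,
      Coalgebra.comul (R := ℂ) x ∈
        ⨆ (p : ℕ × ℕ) (_ : p.1 + p.2 = n),
          LinearMap.range (TensorProduct.map (ℬ p.1).subtype (ℬ p.2).subtype))
    (hsplit : IsCompl Kneg Kpos)
    (hKnegMul : ∀ x ∈ Kneg, ∀ y ∈ Kneg, x * y ∈ Kneg)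
    (hKposMul : ∀ x ∈ Kpos, ∀ y ∈ Kpos, x * y ∈ Kpos)
    (x y : H) :
    gammaL ℬ Kneg Kpos γ hinternal hsplit (x * y)
      = gammaL ℬ Kneg Kpos γ hinternal hsplit x * gammaL ℬ Kneg Kpos γ hinternal hsplit y := by
  set gL := gammaL ℬ Kneg Kpos γ hinternal hsplit with hgLdef
  have homog := gammaL_mul_homog ℬ Kneg Kpos γ hinternal hconn hmul hcomul hsplit
    hKnegMul hKposMul
  -- first extend in y, for homogeneous x
  have h1 : ∀ m : ℕ, ∀ x ∈ ℬ m, ∀ y : H, gL (x * y) = gL x * gL y := by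
    intro m x hx y
    have hy : y ∈ (⊤ : Submodule ℂ H) := Submodule.mem_top
    rw [← hinternal.submodule_iSup_eq_top] at hy
    set P : Submodule ℂ H :=
      { carrier := {z | gL (x * z) = gL x * gL z}
        zero_mem' := by simp
        add_mem' := fun {u v} hu hv => by
          simp only [Set.mem_setOf_eq] at *
          rw [mul_add, map_add, hu, hv, map_add, mul_add]
        smul_mem' := fun c {u} hu => by
          simp only [Set.mem_setOf_eq] at *
          rw [mul_smul_comm, map_smul, hu, map_smul, mul_smul_comm] } with hP
    have hle : (⨆ n, ℬ n) ≤ P := by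
      refine iSup_le fun n z hz => ?_
      exact homog (m + n) m n rfl x hx z hz
    exact hle hy
  have hx : x ∈ (⊤ : Submodule ℂ H) := Submodule.mem_top
  rw [← hinternal.submodule_iSup_eq_top] at hx
  set P : Submodule ℂ H :=
    { carrier := {z | gL (z * y) = gL z * gL y}
      zero_mem' := by simp
      add_mem' := fun {u v} hu hv => by
        simp only [Set.mem_setOf_eq] at *
        rw [add_mul, map_add, hu, hv, map_add, add_mul]
      smul_mem' := fun c {u} hu => by
        simp only [Set.mem_setOf_eq] at *
        rw [smul_mul_assoc, map_smul, hu, map_smul, smul_mul_assoc] } with hP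
  have hle : (⨆ n, ℬ n) ≤ P := by
    refine iSup_le fun n z hz => ?_
    exact h1 n z hz y
  exact hle hx

noncomputable def gammaM (hinternal : DirectSum.IsInternal ℬ) (hconn : ℬ 0 = 1)
    (hmul : ∀ m n : ℕ, ∀ x ∈ ℬ m, ∀ y ∈ ℬ n, x * y ∈ ℬ (m + n))
    (hcomul : ∀ n : ℕ, ∀ x ∈ ℬ n,
      Coalgebra.comul (R := ℂ) x ∈
        ⨆ (p : ℕ × ℕ) (_ : p.1 + p.2 = n),
          LinearMap.range (TensorProduct.map (ℬ p.1).subtype (ℬ p.2).subtype))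
    (hsplit : IsCompl Kneg Kpos)
    (hKnegMul : ∀ x ∈ Kneg, ∀ y ∈ Kneg, x * y ∈ Kneg)
    (hKposMul : ∀ x ∈ Kpos, ∀ y ∈ Kpos, x * y ∈ Kpos) : H →ₐ[ℂ] K :=
  AlgHom.ofLinearMap (gammaL ℬ Kneg Kpos γ hinternal hsplit)
    (gammaL_one ℬ Kneg Kpos γ hinternal hconn hsplit)
    (gammaL_mul ℬ Kneg Kpos γ hinternal hconn hmul hcomul hsplit hKnegMul hKposMul)


variable (hinternal : DirectSum.IsInternal ℬ) (hconn : ℬ 0 = 1)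
variable (hmul : ∀ m n : ℕ, ∀ x ∈ ℬ m, ∀ y ∈ ℬ n, x * y ∈ ℬ (m + n))
variable (hcomul : ∀ n : ℕ, ∀ x ∈ ℬ n,
      Coalgebra.comul (R := ℂ) x ∈
        ⨆ (p : ℕ × ℕ) (_ : p.1 + p.2 = n),
          LinearMap.range (TensorProduct.map (ℬ p.1).subtype (ℬ p.2).subtype))
variable (hsplit : IsCompl Kneg Kpos)
variable (hKnegMul : ∀ x ∈ Kneg, ∀ y ∈ Kneg, x * y ∈ Kneg)
variable (hKposMul : ∀ x ∈ Kpos, ∀ y ∈ Kpos, x * y ∈ Kpos)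

noncomputable def gammaP : H →ₐ[ℂ] K :=
  (Algebra.TensorProduct.lift
    (gammaM ℬ Kneg Kpos γ hinternal hconn hmul hcomul hsplit hKnegMul hKposMul) γ
    (fun x y => Commute.all _ _)).comp (Bialgebra.comulAlgHom ℂ H)

lemma gammaM_apply (x : H) :
    gammaM ℬ Kneg Kpos γ hinternal hconn hmul hcomul hsplit hKnegMul hKposMul x
      = gammaL ℬ Kneg Kpos γ hinternal hsplit x := rfl

lemma gammaP_apply (x : H) :
    gammaP ℬ Kneg Kpos γ hinternal hconn hmul hcomul hsplit hKnegMul hKposMul x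
      = conv (gammaL ℬ Kneg Kpos γ hinternal hsplit) γ.toLinearMap x := by
  show (Algebra.TensorProduct.lift
      (gammaM ℬ Kneg Kpos γ hinternal hconn hmul hcomul hsplit hKnegMul hKposMul) γ
      (fun x y => Commute.all _ _)) (Bialgebra.comulAlgHom ℂ H x)
    = LinearMap.mul' ℂ K (TensorProduct.map (gammaL ℬ Kneg Kpos γ hinternal hsplit)
        γ.toLinearMap (Coalgebra.comul (R := ℂ) x))
  have hc : (Bialgebra.comulAlgHom ℂ H) x = Coalgebra.comul (R := ℂ) x := rfl
  rw [hc]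
  induction (Coalgebra.comul (R := ℂ) x) using TensorProduct.induction_on with
  | zero => simp
  | tmul u v =>
    rw [Algebra.TensorProduct.lift_tmul, TensorProduct.map_tmul, LinearMap.mul'_apply]
    rfl
  | add s t hs ht => rw [map_add, map_add, map_add, hs, ht]

lemma conv_antipode :
    conv ((gammaM ℬ Kneg Kpos γ hinternal hconn hmul hcomul hsplit hKnegMul
        hKposMul).toLinearMap ∘ₗ HopfAlgebra.antipode (R := ℂ))
      (gammaL ℬ Kneg Kpos γ hinternal hsplit) = eK := by
  set gM := gammaM ℬ Kneg Kpos γ hinternal hconn hmul hcomul hsplit hKnegMul hKposMul with hgM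
  ext x
  set r := Coalgebra.Repr.arbitrary ℂ x
  rw [conv_repr _ _ x r]
  calc ∑ i ∈ r.index,
        (gM.toLinearMap ∘ₗ HopfAlgebra.antipode (R := ℂ)) (r.left i)
          * gammaL ℬ Kneg Kpos γ hinternal hsplit (r.right i)
      = ∑ i ∈ r.index, gM (HopfAlgebra.antipode (R := ℂ) (r.left i) * r.right i) := by
        refine Finset.sum_congr rfl fun i _ => ?_
        rw [map_mul]
        rfl
    _ = gM (∑ i ∈ r.index, HopfAlgebra.antipode (R := ℂ) (r.left i) * r.right i) :=
        (map_sum gM _ _).symm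
    _ = gM (algebraMap ℂ H (Coalgebra.counit (R := ℂ) x)) := by
        rw [HopfAlgebra.sum_antipode_mul_eq_algebraMap_counit r]
    _ = algebraMap ℂ K (Coalgebra.counit (R := ℂ) x) := gM.commutes _
    _ = eK x := rfl

end Final
end CKaux

/-- Connes–Kreimer: Let `H` be a connected graded commutative Hopf
algebra over ℂ and `K` a commutative ℂ-algebra with a splitting `K = K₋ ⊕ K₊` into
(non-unital resp. unital) subalgebras.  Every algebra homomorphism `γ : H → K` admits a
Birkhoff decomposition `γ = (γ₋ ∘ S) ⋆ γ₊`, where `γ₋, γ₊` are algebra homomorphisms,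
`γ₋` takes values in `ℂ ⊕ K₋` (so `γ₋(Γ) ∈ K₋` for `Γ` in the augmentation ideal) and
`γ₊` takes values in `K₊`. -/
theorem birkhoff_decomposition_exists
    (H : Type*) [CommRing H] [HopfAlgebra ℂ H]
    (ℬ : ℕ → Submodule ℂ H)
    (hinternal : DirectSum.IsInternal ℬ)
    (hconn : ℬ 0 = (1 : Submodule ℂ H))
    (hmul : ∀ m n : ℕ, ∀ x ∈ ℬ m, ∀ y ∈ ℬ n, x * y ∈ ℬ (m + n))
    (hcomul : ∀ n : ℕ, ∀ x ∈ ℬ n,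
      Coalgebra.comul (R := ℂ) x ∈
        ⨆ (p : ℕ × ℕ) (_ : p.1 + p.2 = n),
          LinearMap.range (TensorProduct.map (ℬ p.1).subtype (ℬ p.2).subtype))
    (K : Type*) [CommRing K] [Algebra ℂ K]
    (Kneg Kpos : Submodule ℂ K)
    (hsplit : IsCompl Kneg Kpos)
    (hKnegMul : ∀ x ∈ Kneg, ∀ y ∈ Kneg, x * y ∈ Kneg)
    (hKposMul : ∀ x ∈ Kpos, ∀ y ∈ Kpos, x * y ∈ Kpos)
    (hKposOne : (1 : K) ∈ Kpos)
    (γ : H →ₐ[ℂ] K) :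
    ∃ (γm γp : H →ₐ[ℂ] K),
      (∀ x : H, γm x - algebraMap ℂ K (Coalgebra.counit (R := ℂ) x) ∈ Kneg) ∧
      (∀ x : H, γp x ∈ Kpos) ∧
      (∀ x : H, γ x =
        LinearMap.mul' ℂ K
          (TensorProduct.map (γm.toLinearMap ∘ₗ HopfAlgebra.antipode (R := ℂ))
            γp.toLinearMap (Coalgebra.comul (R := ℂ) x))) := by
  classical
  refine ⟨CKaux.gammaM ℬ Kneg Kpos γ hinternal hconn hmul hcomul hsplit hKnegMul hKposMul,
    CKaux.gammaP ℬ Kneg Kpos γ hinternal hconn hmul hcomul hsplit hKnegMul hKposMul,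
    ?_, ?_, ?_⟩
  · -- γ₋ condition
    intro x
    have h1 : CKaux.gammaM ℬ Kneg Kpos γ hinternal hconn hmul hcomul hsplit hKnegMul hKposMul x
        - algebraMap ℂ K (Coalgebra.counit (R := ℂ) x)
        = CKaux.delta ℬ Kneg Kpos γ hinternal hsplit x := by
      rw [CKaux.gammaM_apply]
      show CKaux.eK (K := K) x + CKaux.delta ℬ Kneg Kpos γ hinternal hsplit x
        - CKaux.eK (K := K) x = _
      ring
    rw [h1, CKaux.delta_fixed ℬ Kneg Kpos γ hinternal hconn hcomul hsplit x, CKaux.Tmap_apply]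
    exact Submodule.neg_mem _ (CKaux.piL_mem_neg Kneg Kpos hsplit _)
  · -- γ₊ condition
    intro x
    rw [CKaux.gammaP_apply]
    have h1 := LinearMap.congr_fun (CKaux.gammaL_conv_eq ℬ Kneg Kpos γ hinternal hsplit) x
    rw [h1, LinearMap.add_apply]
    have h2 : CKaux.gammaL ℬ Kneg Kpos γ hinternal hsplit x
        = CKaux.eK x - CKaux.piL Kneg Kpos hsplit (CKaux.Wmap ℬ Kneg Kpos γ hinternal hsplit x)
          := by
      show CKaux.eK (K := K) x + CKaux.delta ℬ Kneg Kpos γ hinternal hsplit x = _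
      rw [CKaux.delta_eq_neg_piL_W ℬ Kneg Kpos γ hinternal hconn hcomul hsplit x]
      ring
    rw [h2]
    have h3 : CKaux.eK (K := K) x
        - CKaux.piL Kneg Kpos hsplit (CKaux.Wmap ℬ Kneg Kpos γ hinternal hsplit x)
        + CKaux.Wmap ℬ Kneg Kpos γ hinternal hsplit x
        = CKaux.eK x + (CKaux.Wmap ℬ Kneg Kpos γ hinternal hsplit x
            - CKaux.piL Kneg Kpos hsplit (CKaux.Wmap ℬ Kneg Kpos γ hinternal hsplit x)) := by
      ring
    rw [h3]
    refine Submodule.add_mem _ ?_ (CKaux.sub_piL_mem_pos Kneg Kpos hsplit _)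
    rw [CKaux.eK_apply, Algebra.algebraMap_eq_smul_one]
    exact Submodule.smul_mem _ _ hKposOne
  · -- the Birkhoff decomposition identity
    intro x
    show γ x = CKaux.conv
      ((CKaux.gammaM ℬ Kneg Kpos γ hinternal hconn hmul hcomul hsplit hKnegMul
          hKposMul).toLinearMap ∘ₗ HopfAlgebra.antipode (R := ℂ))
      (CKaux.gammaP ℬ Kneg Kpos γ hinternal hconn hmul hcomul hsplit hKnegMul
          hKposMul).toLinearMap x
    have hgPlin : (CKaux.gammaP ℬ Kneg Kpos γ hinternal hconn hmul hcomul hsplit hKnegMul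
        hKposMul).toLinearMap
        = CKaux.conv (CKaux.gammaL ℬ Kneg Kpos γ hinternal hsplit) γ.toLinearMap :=
      LinearMap.ext
        (CKaux.gammaP_apply ℬ Kneg Kpos γ hinternal hconn hmul hcomul hsplit hKnegMul hKposMul)
    rw [hgPlin, ← CKaux.conv_assoc,
      CKaux.conv_antipode ℬ Kneg Kpos γ hinternal hconn hmul hcomul hsplit hKnegMul hKposMul,
      CKaux.conv_eK_left]
    rfl
end

section
/- In the Faà di Bruno-type Hopf algebra H generated by elements Y_1,...,Y_k (in the completed sense, with Y_j = Σ_{n∈ℕ^k} p_n(Y_j) graded by multidegree n ∈ ℕ^k and p_{0}(Y_j) = 1), with coproduct Δ(Y_j) = Σ_{n∈ℕ^k} Y_j Y_1^{n_1}···Y_k^{n_k} ⊗ p_n(Y_j), the coproduct is coassociative. -/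
open scoped TensorProduct
noncomputable section

/-- Multidegrees `n ∈ ℕ^k`. -/
abbrev Md (k : ℕ) := Fin k →₀ ℕ

/-- The Faà di Bruno-type Hopf algebra: the free commutative ℂ-algebra on generators
`pₙ(Y_j)` for `j = 1,…,k` and `n ∈ ℕ^k \ {0}`. -/
abbrev FdB (k : ℕ) := MvPolynomial (Fin k × {n : Md k // n ≠ 0}) ℂ

/-- The generator `pₙ(Y_j)`, with `p₀(Y_j) = 1`. -/
def Pgen (k : ℕ) (j : Fin k) (n : Md k) : FdB k :=
  if h : n = 0 then 1 else MvPolynomial.X (j, ⟨n, h⟩)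

/-- The formal series `Y_j = Σ_n pₙ(Y_j)`, recorded by its multidegree components. -/
def Yser (k : ℕ) (j : Fin k) : MvPowerSeries (Fin k) (FdB k) :=
  fun n => Pgen k j n

/-- The coproduct, defined on generators by the multidegree-`n` components of the formal
identity `Δ(Y_j) = Σ_n Y_j·Y₁^(n₁)···Y_k^(n_k) ⊗ pₙ(Y_j)`:
`Δ(p_m(Y_j)) = Σ_{a+b=m} p_a(Y_j·Y₁^(b₁)···Y_k^(b_k)) ⊗ p_b(Y_j)`. -/
def FdBcomul (k : ℕ) : FdB k →ₐ[ℂ] FdB k ⊗[ℂ] FdB k :=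
  MvPolynomial.aeval (fun p : Fin k × {n : Md k // n ≠ 0} =>
    ∑ ab ∈ Finset.HasAntidiagonal.antidiagonal (p.2 : Md k),
      (MvPowerSeries.coeff (R := FdB k) ab.1
          (Yser k p.1 * ∏ i, (Yser k i) ^ ((ab.2 : Md k) i))) ⊗ₜ[ℂ] Pgen k p.1 ab.2)

namespace FdBaux

open Finset MvPowerSeries

variable {k : ℕ}

section shuffle

variable {M : Type*} [AddCommMonoid M]

theorem ad_swap (n : Md k) (f : Md k → Md k → M) :
    ∑ p ∈ antidiagonal n, f p.1 p.2 = ∑ p ∈ antidiagonal n, f p.2 p.1 := by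
  rw [← Finset.HasAntidiagonal.map_swap_antidiagonal, Finset.sum_map]
  simp

theorem ad_ad (m : Md k) (F : Md k → Md k → Md k → M) :
    ∑ p ∈ antidiagonal m, ∑ q ∈ antidiagonal p.1, F q.1 q.2 p.2 =
      ∑ p ∈ antidiagonal m, ∑ q ∈ antidiagonal p.2, F p.1 q.1 q.2 := by
  rw [Finset.sum_sigma' (antidiagonal m) (fun p => antidiagonal p.1)
      (fun p q => F q.1 q.2 p.2),
    Finset.sum_sigma' (antidiagonal m) (fun p => antidiagonal p.2)
      (fun p q => F p.1 q.1 q.2)]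
  refine Finset.sum_nbij' (fun x => ⟨(x.2.1, x.2.2 + x.1.2), (x.2.2, x.1.2)⟩)
    (fun y => ⟨(y.1.1 + y.2.1, y.2.2), (y.1.1, y.2.1)⟩) ?_ ?_ ?_ ?_ ?_
  · rintro ⟨⟨a, b⟩, ⟨c, d⟩⟩ hx
    simp only [Finset.mem_sigma, Finset.HasAntidiagonal.mem_antidiagonal] at hx ⊢
    obtain ⟨h1, h2⟩ := hx
    exact ⟨by rw [← add_assoc, h2, h1], by trivial⟩
  · rintro ⟨⟨a, b⟩, ⟨c, d⟩⟩ hx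
    simp only [Finset.mem_sigma, Finset.HasAntidiagonal.mem_antidiagonal] at hx ⊢
    obtain ⟨h1, h2⟩ := hx
    exact ⟨by rw [add_assoc, h2, h1], by trivial⟩
  · rintro ⟨⟨a, b⟩, ⟨c, d⟩⟩ hx
    simp only [Finset.mem_sigma, Finset.HasAntidiagonal.mem_antidiagonal] at hx
    obtain ⟨h1, h2⟩ := hx
    simp [h2]
  · rintro ⟨⟨a, b⟩, ⟨c, d⟩⟩ hx
    simp only [Finset.mem_sigma, Finset.HasAntidiagonal.mem_antidiagonal] at hx
    obtain ⟨h1, h2⟩ := hx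
    simp [h2]
  · rintro ⟨⟨a, b⟩, ⟨c, d⟩⟩ _
    rfl

theorem ad_medial (m : Md k) (G : Md k → Md k → Md k → Md k → M) :
    ∑ p ∈ antidiagonal m, ∑ q ∈ antidiagonal p.1, ∑ r ∈ antidiagonal p.2,
        G q.1 q.2 r.1 r.2 =
      ∑ p ∈ antidiagonal m, ∑ q ∈ antidiagonal p.1, ∑ r ∈ antidiagonal p.2,
        G q.1 r.1 q.2 r.2 := by
  calc
    ∑ p ∈ antidiagonal m, ∑ q ∈ antidiagonal p.1, ∑ r ∈ antidiagonal p.2,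
        G q.1 q.2 r.1 r.2
      = ∑ p ∈ antidiagonal m, ∑ q ∈ antidiagonal p.2, ∑ r ∈ antidiagonal q.2,
          G p.1 q.1 r.1 r.2 :=
        ad_ad m (fun x y z => ∑ r ∈ antidiagonal z, G x y r.1 r.2)
    _ = ∑ p ∈ antidiagonal m, ∑ q ∈ antidiagonal p.2, ∑ r ∈ antidiagonal q.2,
          G p.1 r.1 q.1 r.2 := by
        refine Finset.sum_congr rfl fun p _ => ?_
        calc
          ∑ q ∈ antidiagonal p.2, ∑ r ∈ antidiagonal q.2, G p.1 q.1 r.1 r.2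
            = ∑ q ∈ antidiagonal p.2, ∑ r ∈ antidiagonal q.1, G p.1 r.1 r.2 q.2 := by
              rw [ad_ad p.2 (fun x y z => G p.1 x y z)]
          _ = ∑ q ∈ antidiagonal p.2, ∑ r ∈ antidiagonal q.1, G p.1 r.2 r.1 q.2 := by
              refine Finset.sum_congr rfl fun q _ => ?_
              exact ad_swap q.1 (fun x y => G p.1 x y q.2)
          _ = ∑ q ∈ antidiagonal p.2, ∑ r ∈ antidiagonal q.2, G p.1 r.1 q.1 r.2 :=
              ad_ad p.2 (fun x y z => G p.1 y x z)
    _ = ∑ p ∈ antidiagonal m, ∑ q ∈ antidiagonal p.1, ∑ r ∈ antidiagonal p.2,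
          G q.1 r.1 q.2 r.2 := (ad_ad m (fun x y z => ∑ r ∈ antidiagonal z, G x r.1 y r.2)).symm

end shuffle

theorem md_induction {P : Md k → Prop} (h0 : P 0)
    (hstep : ∀ (i : Fin k) (b : Md k), P b → P (Finsupp.single i 1 + b)) :
    ∀ b, P b := by
  intro b
  induction b using Finsupp.induction with
  | zero => exact h0
  | single_add i n f hnf hn hf =>
    clear hn hnf
    induction n with
    | zero => simpa using hf
    | succ n ih =>
      have e : Finsupp.single i (n + 1) + f = Finsupp.single i 1 + (Finsupp.single i n + f) := by
        rw [← add_assoc, ← Finsupp.single_add, add_comm 1 n]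
      rw [e]
      exact hstep i _ ih

theorem prod_pow_single_add {R : Type*} [CommMonoid R] (W : Fin k → R) (i0 : Fin k)
    (b : Md k) :
    (∏ i, W i ^ ((Finsupp.single i0 1 + b : Md k) i)) = W i0 * ∏ i, W i ^ b i := by
  simp only [Finsupp.add_apply, pow_add, Finset.prod_mul_distrib]
  congr 1
  rw [Finset.prod_eq_single i0]
  · rw [Finsupp.single_eq_same, pow_one]
  · intro t _ ht
    rw [Finsupp.single_eq_of_ne' (Ne.symm ht), pow_zero]
  · intro h
    exact absurd (Finset.mem_univ i0) h

/-- `Y₁^(b₁)···Y_k^(b_k)` as a power series. -/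
def YY (k : ℕ) (b : Md k) : MvPowerSeries (Fin k) (FdB k) := ∏ i, Yser k i ^ b i

/-- `p_a(Y_j · Y^b)`, the degree-`a` coefficient of `Y_j Y₁^(b₁)···Y_k^(b_k)`. -/
def Cc (k : ℕ) (j : Fin k) (b a : Md k) : FdB k :=
  MvPowerSeries.coeff (R := FdB k) a (Yser k j * YY k b)

theorem YY_zero : YY k 0 = 1 := by simp [YY]

theorem coeff_Yser (j : Fin k) (a : Md k) :
    MvPowerSeries.coeff (R := FdB k) a (Yser k j) = Pgen k j a := rfl

theorem Pgen_eq (j : Fin k) (b : Md k) : Pgen k j b = Cc k j 0 b := by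
  rw [Cc, YY_zero, mul_one, coeff_Yser]

theorem Cc_zero_zero (j : Fin k) : Cc k j 0 0 = 1 := by
  rw [← Pgen_eq, Pgen, dif_pos rfl]

/-- `Δ` on the generators `pₘ(Y_j)` (including `m = 0`). -/
theorem comul_Pgen (j : Fin k) (m : Md k) :
    FdBcomul k (Pgen k j m) =
      ∑ ab ∈ antidiagonal m, Cc k j ab.2 ab.1 ⊗ₜ[ℂ] Cc k j 0 ab.2 := by
  by_cases h : m = 0
  · subst h
    rw [Pgen, dif_pos rfl, map_one, Finset.HasAntidiagonal.antidiagonal_zero, Finset.sum_singleton]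
    rw [Cc_zero_zero, Algebra.TensorProduct.one_def]
  · rw [Pgen, dif_neg h, FdBcomul, MvPolynomial.aeval_X]
    refine Finset.sum_congr rfl fun ab _ => ?_
    rw [Pgen_eq]
    rfl

/-- The series `Δ(Y_j) = Σ_n Y_j Y^n ⊗ pₙ(Y_j)`, coefficientwise. -/
def Wser (k : ℕ) (i : Fin k) : MvPowerSeries (Fin k) (FdB k ⊗[ℂ] FdB k) :=
  fun m => ∑ ab ∈ antidiagonal m, Cc k i ab.2 ab.1 ⊗ₜ[ℂ] Cc k i 0 ab.2

theorem map_Yser (j : Fin k) :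
    MvPowerSeries.map (FdBcomul k).toRingHom (Yser k j) = Wser k j := by
  funext m
  exact comul_Pgen j m

theorem Cc_split (j i0 : Fin k) (u v E : Md k) :
    Cc k j (Finsupp.single i0 1 + (u + v)) E =
      ∑ q ∈ antidiagonal E, Cc k j u q.1 * Cc k i0 v q.2 := by
  have hY : Yser k j * YY k (Finsupp.single i0 1 + (u + v)) =
      (Yser k j * YY k u) * (Yser k i0 * YY k v) := by
    rw [show YY k (Finsupp.single i0 1 + (u + v)) = Yser k i0 * YY k (u + v) from
      prod_pow_single_add (Yser k) i0 (u + v)]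
    rw [show YY k (u + v) = YY k u * YY k v by
      simp [YY, Finsupp.add_apply, pow_add, Finset.prod_mul_distrib]]
    ring
  rw [Cc, hY, MvPowerSeries.coeff_mul]
  rfl

/-- Key computation: coefficients of `W_j · W₁^(b₁)···W_k^(b_k)`. -/
theorem coeff_Wmul (j : Fin k) :
    ∀ b a : Md k,
      MvPowerSeries.coeff (R := FdB k ⊗[ℂ] FdB k) a (Wser k j * ∏ i, Wser k i ^ b i) =
        ∑ p ∈ antidiagonal a, Cc k j (b + p.2) p.1 ⊗ₜ[ℂ] Cc k j b p.2 := by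
  refine md_induction ?_ ?_
  · intro a
    simp only [Finsupp.coe_zero, Pi.zero_apply, pow_zero, Finset.prod_const_one, mul_one,
      zero_add]
    rfl
  · intro i0 b ih a
    rw [prod_pow_single_add (Wser k) i0 b,
      show Wser k j * (Wser k i0 * ∏ i, Wser k i ^ b i) =
        (Wser k j * ∏ i, Wser k i ^ b i) * Wser k i0 by ring,
      MvPowerSeries.coeff_mul]
    -- left-hand side: expand via the inductive hypothesis
    have lhs_eq : ∑ p ∈ antidiagonal a,
        MvPowerSeries.coeff p.1 (Wser k j * ∏ i, Wser k i ^ b i) *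
          MvPowerSeries.coeff p.2 (Wser k i0) =
        ∑ p ∈ antidiagonal a, ∑ q ∈ antidiagonal p.1, ∑ r ∈ antidiagonal p.2,
          (Cc k j (b + q.2) q.1 * Cc k i0 r.2 r.1) ⊗ₜ[ℂ]
            (Cc k j b q.2 * Cc k i0 0 r.2) := by
      refine Finset.sum_congr rfl fun p _ => ?_
      rw [ih p.1, show MvPowerSeries.coeff p.2 (Wser k i0) =
        ∑ r ∈ antidiagonal p.2, Cc k i0 r.2 r.1 ⊗ₜ[ℂ] Cc k i0 0 r.2 from rfl,
        Finset.sum_mul_sum]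
      refine Finset.sum_congr rfl fun q _ => Finset.sum_congr rfl fun r _ => ?_
      rw [Algebra.TensorProduct.tmul_mul_tmul]
    rw [lhs_eq]
    -- right-hand side: expand the target similarly
    have rhs_eq : ∑ p ∈ antidiagonal a,
        Cc k j (Finsupp.single i0 1 + b + p.2) p.1 ⊗ₜ[ℂ]
          Cc k j (Finsupp.single i0 1 + b) p.2 =
        ∑ p ∈ antidiagonal a, ∑ q ∈ antidiagonal p.1, ∑ r ∈ antidiagonal p.2,
          (Cc k j (b + r.1) q.1 * Cc k i0 r.2 q.2) ⊗ₜ[ℂ]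
            (Cc k j b r.1 * Cc k i0 0 r.2) := by
      refine Finset.sum_congr rfl fun p _ => ?_
      have h2 : Cc k j (Finsupp.single i0 1 + b) p.2 =
          ∑ r ∈ antidiagonal p.2, Cc k j b r.1 * Cc k i0 0 r.2 := by
        rw [show Finsupp.single i0 1 + b = Finsupp.single i0 1 + (b + 0) by rw [add_zero]]
        exact Cc_split j i0 b 0 p.2
      rw [h2, TensorProduct.tmul_sum]
      calc
        ∑ r ∈ antidiagonal p.2,
            Cc k j (Finsupp.single i0 1 + b + p.2) p.1 ⊗ₜ[ℂ]
              (Cc k j b r.1 * Cc k i0 0 r.2)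
          = ∑ r ∈ antidiagonal p.2, ∑ q ∈ antidiagonal p.1,
              (Cc k j (b + r.1) q.1 * Cc k i0 r.2 q.2) ⊗ₜ[ℂ]
                (Cc k j b r.1 * Cc k i0 0 r.2) := by
            refine Finset.sum_congr rfl fun r hr => ?_
            have hr' : r.1 + r.2 = p.2 := Finset.HasAntidiagonal.mem_antidiagonal.mp hr
            have h1 : Cc k j (Finsupp.single i0 1 + b + p.2) p.1 =
                ∑ q ∈ antidiagonal p.1, Cc k j (b + r.1) q.1 * Cc k i0 r.2 q.2 := by
              rw [show Finsupp.single i0 1 + b + p.2 =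
                Finsupp.single i0 1 + ((b + r.1) + r.2) by rw [← hr', add_assoc, add_assoc]]
              exact Cc_split j i0 (b + r.1) r.2 p.1
            rw [h1, TensorProduct.sum_tmul]
        _ = ∑ q ∈ antidiagonal p.1, ∑ r ∈ antidiagonal p.2,
              (Cc k j (b + r.1) q.1 * Cc k i0 r.2 q.2) ⊗ₜ[ℂ]
                (Cc k j b r.1 * Cc k i0 0 r.2) := Finset.sum_comm
    rw [rhs_eq]
    exact ad_medial a (fun e c s t =>
      (Cc k j (b + c) e * Cc k i0 t s) ⊗ₜ[ℂ] (Cc k j b c * Cc k i0 0 t))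

/-- `Δ` of arbitrary coefficients `p_a(Y_j Y^b)`. -/
theorem comul_Cc (j : Fin k) (b a : Md k) :
    FdBcomul k (Cc k j b a) =
      ∑ p ∈ antidiagonal a, Cc k j (b + p.2) p.1 ⊗ₜ[ℂ] Cc k j b p.2 := by
  have h1 : FdBcomul k (Cc k j b a) =
      MvPowerSeries.coeff a
        (MvPowerSeries.map (FdBcomul k).toRingHom (Yser k j * YY k b)) := by
    rw [MvPowerSeries.coeff_map]; rfl
  rw [h1, map_mul, map_Yser]
  have h2 : MvPowerSeries.map (FdBcomul k).toRingHom (YY k b) =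
      ∏ i, Wser k i ^ b i := by
    rw [YY, map_prod]
    refine Finset.prod_congr rfl fun i _ => ?_
    rw [map_pow, map_Yser]
  rw [h2]
  exact coeff_Wmul j b a

end FdBaux

/-- the Faà di Bruno-type coproduct
`Δ(Y_j) = Σ_n Y_j Y₁^(n₁)···Y_k^(n_k) ⊗ pₙ(Y_j)` is coassociative:
`(Δ⊗id)∘Δ = (id⊗Δ)∘Δ`. -/
theorem FdBcomul_coassoc (k : ℕ) : ∀ x : FdB k,
    (Algebra.TensorProduct.assoc ℂ ℂ ℂ (FdB k) (FdB k) (FdB k))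
        ((Algebra.TensorProduct.map (FdBcomul k) (AlgHom.id ℂ (FdB k))) (FdBcomul k x)) =
      (Algebra.TensorProduct.map (AlgHom.id ℂ (FdB k)) (FdBcomul k)) (FdBcomul k x) := by
  have key : (Algebra.TensorProduct.assoc ℂ ℂ ℂ (FdB k) (FdB k) (FdB k)).toAlgHom.comp
      ((Algebra.TensorProduct.map (FdBcomul k) (AlgHom.id ℂ (FdB k))).comp (FdBcomul k)) =
      (Algebra.TensorProduct.map (AlgHom.id ℂ (FdB k)) (FdBcomul k)).comp (FdBcomul k) := by
    apply MvPolynomial.algHom_ext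
    rintro ⟨j, n⟩
    have hX : Pgen k j n.1 = MvPolynomial.X (j, n) := by rw [Pgen, dif_neg n.2]
    simp only [AlgHom.comp_apply, AlgEquiv.toAlgHom_eq_coe, AlgHom.coe_coe]
    rw [← hX, FdBaux.comul_Pgen]
    simp only [map_sum, Algebra.TensorProduct.map_tmul, AlgHom.coe_id, id_eq,
      FdBaux.comul_Cc, TensorProduct.sum_tmul, TensorProduct.tmul_sum,
      Algebra.TensorProduct.assoc_tmul, zero_add]
    refine (FdBaux.ad_ad (n : Md k) (fun x y z =>
      FdBaux.Cc k j (z + y) x ⊗ₜ[ℂ] (FdBaux.Cc k j z y ⊗ₜ[ℂ] FdBaux.Cc k j 0 z))).trans ?_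
    refine Finset.sum_congr rfl fun p _ => Finset.sum_congr rfl fun q hq => ?_
    have hq' : q.1 + q.2 = p.2 := Finset.HasAntidiagonal.mem_antidiagonal.mp hq
    rw [show q.2 + q.1 = p.2 by rw [add_comm, hq']]
  intro x
  exact DFunLike.congr_fun key x
end
end

section
/- Let I be the ideal of ℂ[[λ_1,...,λ_5]] generated by λ_1 - λ_2, λ_2 - λ_3, and λ_3 - λ_4^2 (equivalently, setting g := λ_1, by λ_i - g^{N_i - 2} for i = 1,...,4 with N_1 = N_2 = N_3 = 3, N_4 = 4). Let Diff(ℂ^5,0)^I be the subgroup of formal diffeomorphisms f ∈ Diff(ℂ^5,0) with f(I) ⊆ I. Then there is a short exact sequence 1 → (1+I)^5 → Diff(ℂ^5,0)^I → Diff(ℂ^2,0) → 1, where (1+I)^5 acts by f(λ_j) = λ_j(1 + B_j) with B_j ∈ I, the surjection is induced by passing to the quotient ℂ[[λ_1,...,λ_5]]/I ≅ ℂ[[g, λ_5]], and moreover this sequence splits. -/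
noncomputable section

abbrev A5 := MvPowerSeries (Fin 5) ℂ
abbrev A2 := MvPowerSeries (Fin 2) ℂ

/-- Substitution of a 5-tuple of series into a series in 5 variables. -/
def subst5 (s : A5) (g : Fin 5 → A5) : A5 :=
  fun m => ∑ᶠ n : Fin 5 →₀ ℕ, MvPowerSeries.coeff n s *
    MvPowerSeries.coeff m (∏ j, (g j) ^ (n j))

/-- Substitution of a 2-tuple of series into a series in 2 variables. -/
def subst2 (s : A2) (g : Fin 2 → A2) : A2 :=
  fun m => ∑ᶠ n : Fin 2 →₀ ℕ, MvPowerSeries.coeff n s *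
    MvPowerSeries.coeff m (∏ j, (g j) ^ (n j))

/-- `Diff(ℂ⁵,0)`: tuples `f_j(λ) = λ_j·(1 + higher order)`; group under composition. -/
def IsDiff5 (f : Fin 5 → A5) : Prop :=
  ∀ j, ∃ u : A5, MvPowerSeries.constantCoeff u = 1 ∧
    f j = MvPowerSeries.X j * u

/-- `Diff(ℂ²,0)` in the variables `(g, λ₅)`. -/
def IsDiff2 (f : Fin 2 → A2) : Prop :=
  ∀ j, ∃ u : A2, MvPowerSeries.constantCoeff u = 1 ∧
    f j = MvPowerSeries.X j * u

/-- Composition of formal diffeomorphisms (substitution of `g` into `f`). -/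
def compDiff5 (f g : Fin 5 → A5) : Fin 5 → A5 := fun j => subst5 (f j) g

def compDiff2 (f g : Fin 2 → A2) : Fin 2 → A2 := fun j => subst2 (f j) g

/-- The ideal `I = (λ_i - g^(N_i-2) : i = 2,3,4)`, `g := λ₁`. -/
def idealI (N : Fin 5 → ℕ) : Ideal A5 :=
  Ideal.span {x | ∃ i : Fin 5, i ∈ ({1, 2, 3} : Set (Fin 5)) ∧
    x = MvPowerSeries.X i - (MvPowerSeries.X 0 : A5) ^ (N i - 2)}

/-- The subgroup `Diff(ℂ⁵,0)^I` of diffeomorphisms preserving the ideal `I`. -/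
def IsDiffI (N : Fin 5 → ℕ) (f : Fin 5 → A5) : Prop :=
  IsDiff5 f ∧ ∀ x ∈ idealI N, subst5 x f ∈ idealI N

/-- The map to two variables induced by the quotient
`ℂ[[λ₁,…,λ₅]]/I ≅ ℂ[[g,λ₅]]`: substitute `λ_i ↦ g^(N_i-2)` (`i=1,…,4`), `λ₅ ↦ λ₅`. -/
def toTwoVars (N : Fin 5 → ℕ) (s : A5) : A2 :=
  fun m => ∑ᶠ n : Fin 5 →₀ ℕ, MvPowerSeries.coeff n s *
    MvPowerSeries.coeff m (∏ j,
      (if j = 4 then (MvPowerSeries.X 1 : A2)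
        else (MvPowerSeries.X 0 : A2) ^ (N j - 2)) ^ (n j))

/-- The induced projection `Diff(ℂ⁵,0)^I → Diff(ℂ²,0)`. -/
def projDiff (N : Fin 5 → ℕ) (f : Fin 5 → A5) : Fin 2 → A2 :=
  fun b => if b = 0 then toTwoVars N (f 0) else toTwoVars N (f 4)

open MvPowerSeries

namespace SESAux

set_option linter.unusedSectionVars false

variable {σ τ υ : Type*} [Fintype σ] [DecidableEq σ] [Fintype τ] [DecidableEq τ]
  [Fintype υ] [DecidableEq υ]

/-- general substitution -/
def gsubst (s : MvPowerSeries σ ℂ) (g : σ → MvPowerSeries τ ℂ) : MvPowerSeries τ ℂ :=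
  fun m => ∑ᶠ n : σ →₀ ℕ, MvPowerSeries.coeff n s *
    MvPowerSeries.coeff m (∏ j, (g j) ^ (n j))

def Zconst (g : σ → MvPowerSeries τ ℂ) : Prop :=
  ∀ j, MvPowerSeries.constantCoeff (g j) = 0

def wdeg (m : τ →₀ ℕ) : ℕ := ∑ j, m j

lemma le_wdeg (m : τ →₀ ℕ) (j : τ) : m j ≤ wdeg m :=
  Finset.single_le_sum (fun _ _ => Nat.zero_le _) (Finset.mem_univ j)

lemma wdeg_add (a b : τ →₀ ℕ) : wdeg (a + b) = wdeg a + wdeg b := by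
  simp [wdeg, Finset.sum_add_distrib]

lemma eq_zero_of_wdeg_eq_zero {m : τ →₀ ℕ} (h : wdeg m = 0) : m = 0 := by
  ext j
  have := le_wdeg m j
  simp only [Finsupp.coe_zero, Pi.zero_apply]
  omega

/-- order at least `a` -/
def OrdGe (s : MvPowerSeries τ ℂ) (a : ℕ) : Prop :=
  ∀ m, wdeg m < a → MvPowerSeries.coeff m s = 0

lemma ordGe_mul {s t : MvPowerSeries τ ℂ} {a b : ℕ} (hs : OrdGe s a) (ht : OrdGe t b) :
    OrdGe (s * t) (a + b) := by
  intro m hm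
  rw [MvPowerSeries.coeff_mul]
  apply Finset.sum_eq_zero
  rintro ⟨p, q⟩ hpq
  rw [Finset.HasAntidiagonal.mem_antidiagonal] at hpq
  have hw : wdeg p + wdeg q < a + b := by rw [← wdeg_add, hpq]; exact hm
  rcases lt_or_ge (wdeg p) a with h | h
  · rw [hs p h, zero_mul]
  · rw [ht q (by omega), mul_zero]

lemma ordGe_of_constantCoeff_zero {s : MvPowerSeries τ ℂ}
    (h : MvPowerSeries.constantCoeff s = 0) : OrdGe s 1 := by
  intro m hm
  have : m = 0 := eq_zero_of_wdeg_eq_zero (by omega)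
  rw [this, MvPowerSeries.coeff_zero_eq_constantCoeff, h]

lemma ordGe_pow {s : MvPowerSeries τ ℂ} (h : MvPowerSeries.constantCoeff s = 0)
    (k : ℕ) : OrdGe (s ^ k) k := by
  induction k with
  | zero => intro m hm; omega
  | succ k ih =>
      rw [pow_succ]
      exact ordGe_mul ih (ordGe_of_constantCoeff_zero h)

lemma ordGe_prod_pow {g : σ → MvPowerSeries τ ℂ} (hg : Zconst g) (n : σ →₀ ℕ)
    (s : Finset σ) : OrdGe (∏ j ∈ s, g j ^ n j) (∑ j ∈ s, n j) := by
  classical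
  induction s using Finset.induction_on with
  | empty => intro m hm; simp at hm
  | insert _ _ hx ih =>
      rename_i a s'
      rw [Finset.prod_insert hx, Finset.sum_insert hx]
      exact ordGe_mul (ordGe_pow (hg a) (n a)) ih

/-- key vanishing lemma -/
lemma coeff_prod_pow_eq_zero {g : σ → MvPowerSeries τ ℂ} (hg : Zconst g)
    {n : σ →₀ ℕ} {m : τ →₀ ℕ} (h : wdeg m < ∑ j, n j) :
    MvPowerSeries.coeff m (∏ j, g j ^ n j) = 0 :=
  ordGe_prod_pow hg n Finset.univ m h

/-- the box of multi-indices with all entries `≤ k` -/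
def box (k : ℕ) : Finset (σ →₀ ℕ) :=
  Finset.Iic (Finsupp.equivFunOnFinite.symm fun _ => k)

lemma mem_box {k : ℕ} {n : σ →₀ ℕ} : n ∈ (box k : Finset (σ →₀ ℕ)) ↔ ∀ j, n j ≤ k := by
  simp [box, Finset.mem_Iic, Finsupp.le_def]

lemma box_mono {k l : ℕ} (h : k ≤ l) : (box k : Finset (σ →₀ ℕ)) ⊆ box l := by
  intro n hn
  rw [mem_box] at hn ⊢
  exact fun j => le_trans (hn j) h

lemma zero_mem_box {k : ℕ} : (0 : σ →₀ ℕ) ∈ (box k : Finset (σ →₀ ℕ)) :=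
  mem_box.mpr fun j => by simp

lemma self_mem_box {m : σ →₀ ℕ} : m ∈ (box (wdeg m) : Finset (σ →₀ ℕ)) :=
  mem_box.mpr (le_wdeg m)

lemma coeff_gsubst_eq_sum {s : MvPowerSeries σ ℂ} {g : σ → MvPowerSeries τ ℂ}
    (hg : Zconst g) {m : τ →₀ ℕ} {T : Finset (σ →₀ ℕ)} (hT : box (wdeg m) ⊆ T) :
    MvPowerSeries.coeff m (gsubst s g) =
      ∑ n ∈ T, MvPowerSeries.coeff n s * MvPowerSeries.coeff m (∏ j, g j ^ n j) := by
  have hsupp : Function.support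
      (fun n : σ →₀ ℕ => MvPowerSeries.coeff n s *
        MvPowerSeries.coeff m (∏ j, g j ^ n j)) ⊆ T := by
    intro n hn
    simp only [Function.mem_support] at hn
    apply hT
    rw [mem_box]
    intro j
    by_contra hj
    push_neg at hj
    exact hn (by
      rw [coeff_prod_pow_eq_zero hg (lt_of_lt_of_le hj (le_wdeg n j)), mul_zero])
  exact finsum_eq_sum_of_support_subset _ hsupp

/-- truncation to a polynomial -/
def truncD (d : ℕ) (s : MvPowerSeries σ ℂ) : MvPolynomial σ ℂ :=
  ∑ n ∈ (box d : Finset (σ →₀ ℕ)), MvPolynomial.monomial n (MvPowerSeries.coeff n s)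

lemma coeff_truncD {d : ℕ} {s : MvPowerSeries σ ℂ} (n : σ →₀ ℕ) :
    MvPolynomial.coeff n (truncD d s) =
      if n ∈ (box d : Finset (σ →₀ ℕ)) then MvPowerSeries.coeff n s else 0 := by
  rw [truncD, MvPolynomial.coeff_sum]
  simp only [MvPolynomial.coeff_monomial]
  rw [Finset.sum_ite_eq' (box d) n (fun n' => MvPowerSeries.coeff n' s)]

/-- evaluation of a sum of monomials -/
lemma coeff_aeval_sum_monomial {g : σ → MvPowerSeries τ ℂ} (T : Finset (σ →₀ ℕ))
    (c : (σ →₀ ℕ) → ℂ) (m : τ →₀ ℕ) :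
    MvPowerSeries.coeff m
        (MvPolynomial.aeval g (∑ n ∈ T, MvPolynomial.monomial n (c n))) =
      ∑ n ∈ T, c n * MvPowerSeries.coeff m (∏ j, g j ^ n j) := by
  rw [map_sum, map_sum]
  apply Finset.sum_congr rfl
  intro n _
  rw [MvPolynomial.aeval_monomial, ← MvPowerSeries.c_eq_algebraMap]
  rw [Finsupp.prod_pow]
  rw [show (MvPowerSeries.C) (c n) * ∏ j, g j ^ n j = c n • ∏ j, g j ^ n j by
    rw [MvPowerSeries.c_eq_algebraMap, Algebra.smul_def]]
  rw [map_smul, smul_eq_mul]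

lemma coeff_aeval_support {g : σ → MvPowerSeries τ ℂ} (P : MvPolynomial σ ℂ) (m : τ →₀ ℕ) :
    MvPowerSeries.coeff m (MvPolynomial.aeval g P) =
      ∑ n ∈ P.support, MvPolynomial.coeff n P * MvPowerSeries.coeff m (∏ j, g j ^ n j) := by
  conv_lhs => rw [P.as_sum]
  exact coeff_aeval_sum_monomial _ _ _

/-- CORE: the substitution agrees with evaluation of any high-enough truncation -/
lemma coeff_gsubst_eq_coeff_aeval {s : MvPowerSeries σ ℂ} {g : σ → MvPowerSeries τ ℂ}
    (hg : Zconst g) {m : τ →₀ ℕ} {d : ℕ} (hd : wdeg m ≤ d) :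
    MvPowerSeries.coeff m (gsubst s g) =
      MvPowerSeries.coeff m (MvPolynomial.aeval g (truncD d s)) := by
  rw [truncD, coeff_aeval_sum_monomial]
  exact coeff_gsubst_eq_sum hg (box_mono hd)

lemma gsubst_add {s t : MvPowerSeries σ ℂ} {g : σ → MvPowerSeries τ ℂ} (hg : Zconst g) :
    gsubst (s + t) g = gsubst s g + gsubst t g := by
  ext m
  rw [map_add, coeff_gsubst_eq_sum hg (subset_refl _), coeff_gsubst_eq_sum hg (subset_refl _),
    coeff_gsubst_eq_sum hg (subset_refl _), ← Finset.sum_add_distrib]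
  apply Finset.sum_congr rfl
  intro n _
  rw [map_add, add_mul]

lemma gsubst_neg {s : MvPowerSeries σ ℂ} {g : σ → MvPowerSeries τ ℂ} (hg : Zconst g) :
    gsubst (-s) g = - gsubst s g := by
  ext m
  rw [map_neg, coeff_gsubst_eq_sum hg (subset_refl _), coeff_gsubst_eq_sum hg (subset_refl _),
    ← Finset.sum_neg_distrib]
  apply Finset.sum_congr rfl
  intro n _
  rw [map_neg, neg_mul]

lemma gsubst_sub {s t : MvPowerSeries σ ℂ} {g : σ → MvPowerSeries τ ℂ} (hg : Zconst g) :
    gsubst (s - t) g = gsubst s g - gsubst t g := by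
  rw [sub_eq_add_neg, gsubst_add hg, gsubst_neg hg, sub_eq_add_neg]

lemma gsubst_zero {g : σ → MvPowerSeries τ ℂ} (hg : Zconst g) :
    gsubst (0 : MvPowerSeries σ ℂ) g = 0 := by
  ext m
  rw [coeff_gsubst_eq_sum hg (subset_refl _)]
  simp

lemma gsubst_C {g : σ → MvPowerSeries τ ℂ} (hg : Zconst g) (c : ℂ) :
    gsubst (MvPowerSeries.C c) g = MvPowerSeries.C c := by
  ext m
  rw [coeff_gsubst_eq_sum hg (subset_refl _)]
  rw [Finset.sum_eq_single_of_mem 0 zero_mem_box]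
  · simp only [Finsupp.coe_zero, Pi.zero_apply, pow_zero, Finset.prod_const_one]
    by_cases h : m = 0 <;>
      simp [MvPowerSeries.coeff_one, MvPowerSeries.coeff_C, h]
  · intro n _ hn
    rw [MvPowerSeries.coeff_C, if_neg hn, zero_mul]

lemma gsubst_one {g : σ → MvPowerSeries τ ℂ} (hg : Zconst g) :
    gsubst (1 : MvPowerSeries σ ℂ) g = 1 := by
  have h1 : (1 : MvPowerSeries σ ℂ) = MvPowerSeries.C 1 := by simp
  rw [h1, gsubst_C hg]
  simp

lemma gsubst_X {g : σ → MvPowerSeries τ ℂ} (hg : Zconst g) (i : σ) :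
    gsubst (MvPowerSeries.X i) g = g i := by
  ext m
  rw [coeff_gsubst_eq_sum hg
    (Finset.subset_insert (Finsupp.single i 1) _ |>.trans (subset_refl _))]
  rw [Finset.sum_eq_single_of_mem (Finsupp.single i 1) (Finset.mem_insert_self _ _)]
  · rw [MvPowerSeries.coeff_X, if_pos rfl, one_mul]
    congr 1
    rw [Finset.prod_eq_single i]
    · rw [Finsupp.single_eq_same, pow_one]
    · intro j _ hj
      rw [Finsupp.single_eq_of_ne' (Ne.symm hj), pow_zero]
    · intro h; exact absurd (Finset.mem_univ i) h
  · intro n _ hn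
    rw [MvPowerSeries.coeff_X, if_neg hn, zero_mul]

lemma constantCoeff_gsubst {s : MvPowerSeries σ ℂ} {g : σ → MvPowerSeries τ ℂ}
    (hg : Zconst g) :
    MvPowerSeries.constantCoeff (gsubst s g) = MvPowerSeries.constantCoeff s := by
  rw [← MvPowerSeries.coeff_zero_eq_constantCoeff_apply,
    ← MvPowerSeries.coeff_zero_eq_constantCoeff_apply]
  rw [coeff_gsubst_eq_sum hg (subset_refl _)]
  rw [Finset.sum_eq_single_of_mem 0 zero_mem_box]
  · simp only [Finsupp.coe_zero, Pi.zero_apply, pow_zero, Finset.prod_const_one]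
    rw [MvPowerSeries.coeff_one]
    simp
  · intro n hn hn0
    have : n = 0 := by
      apply eq_zero_of_wdeg_eq_zero
      rw [mem_box] at hn
      have : ∀ j, n j = 0 := fun j => Nat.le_zero.mp (by simpa [wdeg] using hn j)
      simp [wdeg, this]
    exact absurd this hn0

lemma coeff_aeval_eq_zero_of_high {g : σ → MvPowerSeries τ ℂ} (hg : Zconst g)
    {P : MvPolynomial σ ℂ} {d : ℕ}
    (hP : ∀ n ∈ (box d : Finset (σ →₀ ℕ)), MvPolynomial.coeff n P = 0)
    {m : τ →₀ ℕ} (hm : wdeg m ≤ d) :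
    MvPowerSeries.coeff m (MvPolynomial.aeval g P) = 0 := by
  rw [coeff_aeval_support]
  apply Finset.sum_eq_zero
  intro n hn
  by_cases hb : n ∈ (box d : Finset (σ →₀ ℕ))
  · rw [hP n hb, zero_mul]
  · rw [mem_box] at hb
    push_neg at hb
    obtain ⟨j, hj⟩ := hb
    rw [coeff_prod_pow_eq_zero hg
      (lt_of_le_of_lt hm (lt_of_lt_of_le hj (le_wdeg n j))), mul_zero]

lemma gsubst_mul {s t : MvPowerSeries σ ℂ} {g : σ → MvPowerSeries τ ℂ} (hg : Zconst g) :
    gsubst (s * t) g = gsubst s g * gsubst t g := by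
  ext m
  set d := wdeg m with hd
  rw [coeff_gsubst_eq_coeff_aeval hg (le_refl d)]
  have key : MvPowerSeries.coeff m (MvPolynomial.aeval g (truncD d (s * t))) =
      MvPowerSeries.coeff m (MvPolynomial.aeval g (truncD d s * truncD d t)) := by
    have hQ : ∀ n ∈ (box d : Finset (σ →₀ ℕ)),
        MvPolynomial.coeff n (truncD d (s * t) - truncD d s * truncD d t) = 0 := by
      intro n hn
      rw [MvPolynomial.coeff_sub, coeff_truncD, if_pos hn, MvPolynomial.coeff_mul,
        MvPowerSeries.coeff_mul]
      rw [sub_eq_zero]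
      apply Finset.sum_congr rfl
      rintro ⟨p, q⟩ hpq
      rw [Finset.HasAntidiagonal.mem_antidiagonal] at hpq
      have hp : p ∈ (box d : Finset (σ →₀ ℕ)) := by
        rw [mem_box] at hn ⊢
        intro j
        have : p j ≤ n j := by
          have := congrArg (fun x => x j) hpq
          simp only [Finsupp.coe_add, Pi.add_apply] at this
          omega
        exact le_trans this (hn j)
      have hq : q ∈ (box d : Finset (σ →₀ ℕ)) := by
        rw [mem_box] at hn ⊢
        intro j
        have : q j ≤ n j := by
          have := congrArg (fun x => x j) hpq
          simp only [Finsupp.coe_add, Pi.add_apply] at this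
          omega
        exact le_trans this (hn j)
      rw [coeff_truncD, coeff_truncD, if_pos hp, if_pos hq]
    have := coeff_aeval_eq_zero_of_high hg hQ (le_refl d)
    rw [map_sub, map_sub] at this
    exact sub_eq_zero.mp this
  rw [key, map_mul, MvPowerSeries.coeff_mul, MvPowerSeries.coeff_mul]
  apply Finset.sum_congr rfl
  intro pq hpq
  rw [Finset.HasAntidiagonal.mem_antidiagonal] at hpq
  have hp : wdeg pq.1 ≤ d := by rw [hd, ← hpq, wdeg_add]; exact Nat.le_add_right _ _
  have hq : wdeg pq.2 ≤ d := by rw [hd, ← hpq, wdeg_add]; exact Nat.le_add_left _ _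
  rw [← coeff_gsubst_eq_coeff_aeval hg hp, ← coeff_gsubst_eq_coeff_aeval hg hq]

lemma gsubst_pow {s : MvPowerSeries σ ℂ} {g : σ → MvPowerSeries τ ℂ} (hg : Zconst g)
    (k : ℕ) : gsubst (s ^ k) g = gsubst s g ^ k := by
  induction k with
  | zero => simpa using gsubst_one hg
  | succ k ih => rw [pow_succ, pow_succ, gsubst_mul hg, ih]

lemma gsubst_aeval {g : σ → MvPowerSeries τ ℂ}  (hg : Zconst g)
    (f : υ → MvPowerSeries σ ℂ) (P : MvPolynomial υ ℂ) :
    gsubst (MvPolynomial.aeval f P) g =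
      MvPolynomial.aeval (fun j => gsubst (f j) g) P := by
  induction P using MvPolynomial.induction_on with
  | C a =>
      rw [MvPolynomial.aeval_C, MvPolynomial.aeval_C, ← MvPowerSeries.c_eq_algebraMap,
        ← MvPowerSeries.c_eq_algebraMap, gsubst_C hg]
  | add p q hp hq => rw [map_add, map_add, gsubst_add hg, hp, hq]
  | mul_X p i hp => rw [map_mul, map_mul, gsubst_mul hg, hp, MvPolynomial.aeval_X,
      MvPolynomial.aeval_X]

lemma zconst_comp {f : υ → MvPowerSeries σ ℂ} {g : σ → MvPowerSeries τ ℂ}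
    (hf : Zconst f) (hg : Zconst g) : Zconst (fun j => gsubst (f j) g) := by
  intro j
  rw [constantCoeff_gsubst hg]
  exact hf j

lemma gsubst_comp {x : MvPowerSeries υ ℂ} {f : υ → MvPowerSeries σ ℂ}
    {g : σ → MvPowerSeries τ ℂ} (hf : Zconst f) (hg : Zconst g) :
    gsubst x (fun j => gsubst (f j) g) = gsubst (gsubst x f) g := by
  ext m
  set d := wdeg m with hd
  rw [coeff_gsubst_eq_coeff_aeval (zconst_comp hf hg) (le_refl d),
    ← gsubst_aeval hg f (truncD d x)]
  have key : MvPowerSeries.coeff m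
      (gsubst (gsubst x f - MvPolynomial.aeval f (truncD d x)) g) = 0 := by
    rw [coeff_gsubst_eq_sum hg (subset_refl _)]
    apply Finset.sum_eq_zero
    intro n _
    by_cases hc : wdeg n ≤ d
    · have : MvPowerSeries.coeff n (gsubst x f - MvPolynomial.aeval f (truncD d x)) = 0 := by
        rw [map_sub, coeff_gsubst_eq_coeff_aeval hf hc, sub_self]
      rw [this, zero_mul]
    · push_neg at hc
      rw [coeff_prod_pow_eq_zero hg (lt_of_le_of_lt (le_refl d) hc), mul_zero]
  rw [gsubst_sub hg, map_sub] at key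
  exact (sub_eq_zero.mp key).symm

lemma prod_X_pow (n : σ →₀ ℕ) :
    (∏ j, (MvPowerSeries.X j : MvPowerSeries σ ℂ) ^ n j) =
      MvPowerSeries.monomial n 1 := by
  have step : ∀ s : Finset σ,
      (∏ j ∈ s, (MvPowerSeries.X j : MvPowerSeries σ ℂ) ^ n j) =
        MvPowerSeries.monomial (∑ j ∈ s, Finsupp.single j (n j)) 1 := by
    intro s
    induction s using Finset.induction_on with
    | empty => simp
    | insert _ _ hx ih =>
        rename_i a s'
        rw [Finset.prod_insert hx, Finset.sum_insert hx, ih,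
          MvPowerSeries.X_pow_eq, MvPowerSeries.monomial_mul_monomial, one_mul]
  have hsum : (∑ j : σ, Finsupp.single j (n j)) = n := by
    ext j
    rw [Finset.sum_apply']
    rw [Finset.sum_eq_single j (fun b _ hb => Finsupp.single_eq_of_ne' hb)
      (fun h => absurd (Finset.mem_univ j) h)]
    exact Finsupp.single_eq_same
  rw [step Finset.univ, hsum]

lemma gsubst_id (s : MvPowerSeries σ ℂ) :
    gsubst s (fun j => MvPowerSeries.X j) = s := by
  have hX : Zconst (fun j : σ => (MvPowerSeries.X j : MvPowerSeries σ ℂ)) := fun j =>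
    MvPowerSeries.constantCoeff_X j
  ext m
  rw [coeff_gsubst_eq_sum hX (subset_refl _)]
  rw [Finset.sum_eq_single_of_mem m self_mem_box]
  · rw [prod_X_pow, MvPowerSeries.coeff_monomial, if_pos rfl, mul_one]
  · intro n _ hn
    rw [prod_X_pow, MvPowerSeries.coeff_monomial, if_neg (fun h => hn h.symm), mul_zero]

lemma coeff_X_mul_add (i : σ) (u : MvPowerSeries σ ℂ) (m : σ →₀ ℕ) :
    MvPowerSeries.coeff (m + Finsupp.single i 1) (MvPowerSeries.X i * u) =
      MvPowerSeries.coeff m u := by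
  rw [MvPowerSeries.coeff_mul]
  rw [Finset.sum_eq_single (Finsupp.single i 1, m)]
  · rw [MvPowerSeries.coeff_X, if_pos rfl, one_mul]
  · intro pq hpq hne
    rw [Finset.HasAntidiagonal.mem_antidiagonal] at hpq
    rw [MvPowerSeries.coeff_X]
    by_cases h : pq.1 = Finsupp.single i 1
    · exfalso
      apply hne
      have : pq.2 = m := by
        have := hpq
        rw [h, add_comm] at this
        exact add_right_cancel this
      rw [← h, ← this]
    · rw [if_neg h, zero_mul]
  · intro h
    exfalso
    apply h
    rw [Finset.HasAntidiagonal.mem_antidiagonal, add_comm]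

lemma coeff_X_mul_of_eq_zero (i : σ) (u : MvPowerSeries σ ℂ) {m : σ →₀ ℕ}
    (h : m i = 0) : MvPowerSeries.coeff m (MvPowerSeries.X i * u) = 0 := by
  rw [MvPowerSeries.coeff_mul]
  apply Finset.sum_eq_zero
  intro pq hpq
  rw [Finset.HasAntidiagonal.mem_antidiagonal] at hpq
  rw [MvPowerSeries.coeff_X]
  by_cases hc : pq.1 = Finsupp.single i 1
  · exfalso
    have : m i = pq.1 i + pq.2 i := by
      rw [← hpq]; simp
    rw [hc, Finsupp.single_eq_same, h] at this
    omega
  · rw [if_neg hc, zero_mul]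

/-- divide by `X i` (as coefficient shift) -/
def shiftX (i : σ) (s : MvPowerSeries σ ℂ) : MvPowerSeries σ ℂ :=
  fun m => MvPowerSeries.coeff (m + Finsupp.single i 1) s

lemma coeff_shiftX (i : σ) (s : MvPowerSeries σ ℂ) (m : σ →₀ ℕ) :
    MvPowerSeries.coeff m (shiftX i s) =
      MvPowerSeries.coeff (m + Finsupp.single i 1) s := rfl

lemma shiftX_X_mul (i : σ) (u : MvPowerSeries σ ℂ) : shiftX i (MvPowerSeries.X i * u) = u := by
  ext m
  rw [coeff_shiftX, coeff_X_mul_add]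

lemma coeff_X_mul (i : σ) (u : MvPowerSeries σ ℂ) (m : σ →₀ ℕ) :
    MvPowerSeries.coeff m (MvPowerSeries.X i * u) =
      if m i = 0 then 0 else MvPowerSeries.coeff (m - Finsupp.single i 1) u := by
  by_cases h : m i = 0
  · rw [if_pos h, coeff_X_mul_of_eq_zero i u h]
  · rw [if_neg h]
    have hm : m = (m - Finsupp.single i 1) + Finsupp.single i 1 := by
      ext j
      by_cases hj : j = i
      · subst hj
        simp only [Finsupp.coe_add, Pi.add_apply, Finsupp.coe_tsub, Pi.sub_apply,
          Finsupp.single_eq_same]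
        omega
      · simp [Finsupp.single_eq_of_ne' (fun hh => hj hh.symm)]
    conv_lhs => rw [hm]
    rw [coeff_X_mul_add]


section Specific

variable (N : Fin 5 → ℕ)

/-- the substitution family defining `toTwoVars` -/
def sN : Fin 5 → A2 := fun j =>
  if j = 4 then (MvPowerSeries.X 1 : A2) else (MvPowerSeries.X 0 : A2) ^ (N j - 2)

lemma toTwoVars_eq (s : A5) : toTwoVars N s = gsubst s (sN N) := rfl

lemma subst5_eq (s : A5) (g : Fin 5 → A5) : subst5 s g = gsubst s g := rfl

lemma subst2_eq (s : A2) (g : Fin 2 → A2) : subst2 s g = gsubst s g := rfl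

variable {N}

lemma zconst_sN (hN0 : N 0 = 3) (hN1 : N 1 = 3) (hN2 : N 2 = 3) (hN3 : N 3 = 4) :
    Zconst (sN N) := by
  intro j
  fin_cases j <;>
    simp [sN, hN0, hN1, hN2, hN3]

lemma zconst_of_isDiff5 {f : Fin 5 → A5} (hf : IsDiff5 f) : Zconst f := by
  intro j
  obtain ⟨u, _, hfj⟩ := hf j
  rw [hfj, map_mul, MvPowerSeries.constantCoeff_X, zero_mul]

lemma zconst_of_isDiff2 {f : Fin 2 → A2} (hf : IsDiff2 f) : Zconst f := by
  intro j
  obtain ⟨u, _, hfj⟩ := hf j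
  rw [hfj, map_mul, MvPowerSeries.constantCoeff_X, zero_mul]

lemma gen_mem (i : Fin 5) (hi : i ∈ ({1, 2, 3} : Set (Fin 5))) :
    MvPowerSeries.X i - (MvPowerSeries.X 0 : A5) ^ (N i - 2) ∈ idealI N :=
  Ideal.subset_span ⟨i, hi, rfl⟩

lemma sN_zero (hN0 : N 0 = 3) : sN N 0 = MvPowerSeries.X 0 := by
  simp [sN, hN0]

lemma toTwoVars_of_mem_ideal (hN0 : N 0 = 3) (hN1 : N 1 = 3) (hN2 : N 2 = 3)
    (hN3 : N 3 = 4) {x : A5} (hx : x ∈ idealI N) : toTwoVars N x = 0 := by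
  have hs := zconst_sN hN0 hN1 hN2 hN3
  rw [toTwoVars_eq]
  refine Submodule.span_induction ?_ ?_ ?_ ?_ hx
  · rintro y ⟨i, hi, rfl⟩
    rw [gsubst_sub hs, gsubst_pow hs, gsubst_X hs, gsubst_X hs, sN_zero hN0]
    simp only [Set.mem_insert_iff, Set.mem_singleton_iff] at hi
    rcases hi with rfl | rfl | rfl <;> simp [sN]
  · exact gsubst_zero hs
  · intro a b _ _ ha hb
    rw [gsubst_add hs, ha, hb, add_zero]
  · intro a y _ hy
    rw [smul_eq_mul, gsubst_mul hs, hy, mul_zero]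

lemma mem_ideal_of_toTwoVars_eq_zero (hN0 : N 0 = 3) (hN1 : N 1 = 3) (hN2 : N 2 = 3)
    (hN3 : N 3 = 4) {x : A5} (hx : toTwoVars N x = 0) : x ∈ idealI N := by
  have hs := zconst_sN hN0 hN1 hN2 hN3
  set φ : Fin 5 → A5 := fun j =>
    if j = 0 ∨ j = 4 then MvPowerSeries.X j
    else MvPowerSeries.X j - (MvPowerSeries.X 0 : A5) ^ (N j - 2) with hφdef
  set ψ : Fin 5 → A5 := fun j =>
    if j = 0 ∨ j = 4 then MvPowerSeries.X j
    else MvPowerSeries.X j + (MvPowerSeries.X 0 : A5) ^ (N j - 2) with hψdef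
  have hφ0 : φ 0 = MvPowerSeries.X 0 := by simp [hφdef]
  have hφ4 : φ 4 = MvPowerSeries.X 4 := by simp [hφdef]
  have hφ1 : φ 1 = MvPowerSeries.X 1 - (MvPowerSeries.X 0 : A5) ^ (N 1 - 2) := by
    simp [hφdef]
  have hφ2 : φ 2 = MvPowerSeries.X 2 - (MvPowerSeries.X 0 : A5) ^ (N 2 - 2) := by
    simp [hφdef]
  have hφ3 : φ 3 = MvPowerSeries.X 3 - (MvPowerSeries.X 0 : A5) ^ (N 3 - 2) := by
    simp [hφdef]
  have hψ0 : ψ 0 = MvPowerSeries.X 0 := by simp [hψdef]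
  have hψ4 : ψ 4 = MvPowerSeries.X 4 := by simp [hψdef]
  have hψ1 : ψ 1 = MvPowerSeries.X 1 + (MvPowerSeries.X 0 : A5) ^ (N 1 - 2) := by
    simp [hψdef]
  have hψ2 : ψ 2 = MvPowerSeries.X 2 + (MvPowerSeries.X 0 : A5) ^ (N 2 - 2) := by
    simp [hψdef]
  have hψ3 : ψ 3 = MvPowerSeries.X 3 + (MvPowerSeries.X 0 : A5) ^ (N 3 - 2) := by
    simp [hψdef]
  have hcases : ∀ j : Fin 5, j = 0 ∨ j = 1 ∨ j = 2 ∨ j = 3 ∨ j = 4 := by decide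
  have hφ : Zconst φ := by
    intro j
    rcases hcases j with rfl | rfl | rfl | rfl | rfl <;>
      simp only [hφ0, hφ1, hφ2, hφ3, hφ4, map_sub, map_pow,
        MvPowerSeries.constantCoeff_X, hN1, hN2, hN3] <;> norm_num
  have hψ : Zconst ψ := by
    intro j
    rcases hcases j with rfl | rfl | rfl | rfl | rfl <;>
      simp only [hψ0, hψ1, hψ2, hψ3, hψ4, map_add, map_pow,
        MvPowerSeries.constantCoeff_X, hN1, hN2, hN3] <;> norm_num
  set t : A5 := gsubst x ψ with htdef
  have hxt : x = gsubst t φ := by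
    rw [htdef, ← gsubst_comp hψ hφ]
    have heq : (fun j => gsubst (ψ j) φ) = fun j : Fin 5 => (MvPowerSeries.X j : A5) := by
      funext j
      rcases hcases j with rfl | rfl | rfl | rfl | rfl
      · rw [hψ0, gsubst_X hφ, hφ0]
      · rw [hψ1, gsubst_add hφ, gsubst_pow hφ, gsubst_X hφ, gsubst_X hφ, hφ1, hφ0]
        ring
      · rw [hψ2, gsubst_add hφ, gsubst_pow hφ, gsubst_X hφ, gsubst_X hφ, hφ2, hφ0]
        ring
      · rw [hψ3, gsubst_add hφ, gsubst_pow hφ, gsubst_X hφ, gsubst_X hφ, hφ3, hφ0]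
        ring
      · rw [hψ4, gsubst_X hφ, hφ4]
    rw [heq, gsubst_id]
  -- the composite substitution family
  have hσ'0 : gsubst (φ 0) (sN N) = MvPowerSeries.X 0 := by
    rw [hφ0, gsubst_X hs, sN_zero hN0]
  have hσ'1 : gsubst (φ 1) (sN N) = 0 := by
    rw [hφ1, gsubst_sub hs, gsubst_pow hs, gsubst_X hs, gsubst_X hs, sN_zero hN0]
    simp [sN]
  have hσ'2 : gsubst (φ 2) (sN N) = 0 := by
    rw [hφ2, gsubst_sub hs, gsubst_pow hs, gsubst_X hs, gsubst_X hs, sN_zero hN0]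
    simp [sN]
  have hσ'3 : gsubst (φ 3) (sN N) = 0 := by
    rw [hφ3, gsubst_sub hs, gsubst_pow hs, gsubst_X hs, gsubst_X hs, sN_zero hN0]
    simp [sN]
  have hσ'4 : gsubst (φ 4) (sN N) = MvPowerSeries.X 1 := by
    rw [hφ4, gsubst_X hs]
    simp [sN]
  have hprod : ∀ n' : Fin 5 →₀ ℕ,
      (∏ j, gsubst (φ j) (sN N) ^ n' j) =
        if n' 1 = 0 ∧ n' 2 = 0 ∧ n' 3 = 0 then
          MvPowerSeries.monomial
            (Finsupp.single 0 (n' 0) + Finsupp.single 1 (n' 4)) 1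
        else 0 := by
    intro n'
    rw [Fin.prod_univ_five, hσ'0, hσ'1, hσ'2, hσ'3, hσ'4]
    split_ifs with h
    · obtain ⟨e1, e2, e3⟩ := h
      rw [e1, e2, e3, pow_zero, mul_one, mul_one, mul_one,
        MvPowerSeries.X_pow_eq, MvPowerSeries.X_pow_eq,
        MvPowerSeries.monomial_mul_monomial, one_mul]
    · rw [not_and_or, not_and_or] at h
      rcases h with h | h | h
      · rw [zero_pow h]; ring
      · rw [zero_pow h]; ring
      · rw [zero_pow h]; ring
  have claimA : ∀ n : Fin 5 →₀ ℕ, n 1 = 0 → n 2 = 0 → n 3 = 0 →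
      MvPowerSeries.coeff n t = 0 := by
    intro n h1 h2 h3
    have hTt : gsubst t (fun j => gsubst (φ j) (sN N)) = 0 := by
      rw [gsubst_comp hφ hs, ← hxt, ← toTwoVars_eq]
      exact hx
    set m : Fin 2 →₀ ℕ := Finsupp.single 0 (n 0) + Finsupp.single 1 (n 4) with hm
    have hc : (∑ n' ∈ insert n (box (wdeg m)),
        MvPowerSeries.coeff n' t *
          MvPowerSeries.coeff m (∏ j, gsubst (φ j) (sN N) ^ n' j)) = 0 := by
      rw [← coeff_gsubst_eq_sum (zconst_comp hφ hs) (Finset.subset_insert _ _), hTt,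
        map_zero]
    rw [Finset.sum_eq_single_of_mem n (Finset.mem_insert_self _ _)] at hc
    · rw [hprod n, if_pos ⟨h1, h2, h3⟩, MvPowerSeries.coeff_monomial, if_pos hm,
        mul_one] at hc
      exact hc
    · intro n' _ hne
      rw [hprod n']
      split_ifs with hcond
      · rw [MvPowerSeries.coeff_monomial, if_neg, mul_zero]
        intro heq
        apply hne
        have e0 : n' 0 = n 0 := by
          have := congrArg (fun z : Fin 2 →₀ ℕ => z 0) (hm.symm.trans heq)
          simpa [Finsupp.single_apply] using this.symm
        have e4 : n' 4 = n 4 := by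
          have := congrArg (fun z : Fin 2 →₀ ℕ => z 1) (hm.symm.trans heq)
          simpa [Finsupp.single_apply] using this.symm
        ext j
        rcases hcases j with rfl | rfl | rfl | rfl | rfl
        · exact e0
        · rw [hcond.1, h1]
        · rw [hcond.2.1, h2]
        · rw [hcond.2.2, h3]
        · exact e4
      · rw [map_zero, mul_zero]
  -- decompose t
  set t1 : A5 := shiftX 1 t with ht1
  set t2 : A5 := shiftX 2 (t - MvPowerSeries.X 1 * t1) with ht2
  set t3 : A5 := shiftX 3 (t - MvPowerSeries.X 1 * t1 - MvPowerSeries.X 2 * t2) with ht3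
  have sub_add_single : ∀ (n : Fin 5 →₀ ℕ) (i : Fin 5), n i ≠ 0 →
      n - Finsupp.single i 1 + Finsupp.single i 1 = n := by
    intro n i hi
    ext j
    by_cases hj : j = i
    · subst hj
      simp only [Finsupp.coe_add, Pi.add_apply, Finsupp.coe_tsub, Pi.sub_apply,
        Finsupp.single_eq_same]
      omega
    · simp [Finsupp.single_eq_of_ne' (fun hh => hj hh.symm)]
  have hr2 : ∀ n : Fin 5 →₀ ℕ, MvPowerSeries.coeff n (t - MvPowerSeries.X 1 * t1) =
      if n 1 = 0 then MvPowerSeries.coeff n t else 0 := by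
    intro n
    rw [map_sub, coeff_X_mul]
    split_ifs with h
    · rw [sub_zero]
    · rw [ht1, coeff_shiftX, sub_add_single n 1 h, sub_self]
  have hr3 : ∀ n : Fin 5 →₀ ℕ,
      MvPowerSeries.coeff n (t - MvPowerSeries.X 1 * t1 - MvPowerSeries.X 2 * t2) =
      if n 1 = 0 ∧ n 2 = 0 then MvPowerSeries.coeff n t else 0 := by
    intro n
    rw [map_sub, coeff_X_mul]
    by_cases h2 : n 2 = 0
    · rw [if_pos h2, sub_zero, hr2 n]
      by_cases h1 : n 1 = 0
      · rw [if_pos h1, if_pos ⟨h1, h2⟩]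
      · rw [if_neg h1, if_neg (fun hc => h1 hc.1)]
    · rw [if_neg h2, ht2, coeff_shiftX, sub_add_single n 2 h2, sub_self,
        if_neg (fun hc => h2 hc.2)]
  have hzero : t - MvPowerSeries.X 1 * t1 - MvPowerSeries.X 2 * t2 -
      MvPowerSeries.X 3 * t3 = 0 := by
    ext n
    rw [map_zero, map_sub, coeff_X_mul]
    by_cases h3 : n 3 = 0
    · rw [if_pos h3, sub_zero, hr3 n]
      split_ifs with h
      · exact claimA n h.1 h.2 h3
      · rfl
    · rw [if_neg h3, ht3, coeff_shiftX, sub_add_single n 3 h3, sub_self]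
  have hdecomp : t = MvPowerSeries.X 1 * t1 + MvPowerSeries.X 2 * t2 +
      MvPowerSeries.X 3 * t3 := by
    have h' : t - (MvPowerSeries.X 1 * t1 + MvPowerSeries.X 2 * t2 +
        MvPowerSeries.X 3 * t3) = 0 := by
      rw [← hzero]; ring
    exact sub_eq_zero.mp h'
  rw [hxt, hdecomp, gsubst_add hφ, gsubst_add hφ, gsubst_mul hφ, gsubst_mul hφ,
    gsubst_mul hφ, gsubst_X hφ, gsubst_X hφ, gsubst_X hφ]
  apply Ideal.add_mem
  · apply Ideal.add_mem
    · exact Ideal.mul_mem_right _ _ (by rw [hφ1]; exact gen_mem 1 (by simp))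
    · exact Ideal.mul_mem_right _ _ (by rw [hφ2]; exact gen_mem 2 (by simp))
  · exact Ideal.mul_mem_right _ _ (by rw [hφ3]; exact gen_mem 3 (by simp))

lemma fin2_cases (b : Fin 2) : b = 0 ∨ b = 1 := by omega

lemma fin5_cases (j : Fin 5) : j = 0 ∨ j = 1 ∨ j = 2 ∨ j = 3 ∨ j = 4 := by omega

lemma X_pow_ne_zero_A2 (i : Fin 2) (k : ℕ) : (MvPowerSeries.X i : A2) ^ k ≠ 0 := by
  intro h
  have h2 := congrArg (MvPowerSeries.coeff (Finsupp.single i k)) h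
  rw [MvPowerSeries.X_pow_eq, MvPowerSeries.coeff_monomial, if_pos rfl, map_zero] at h2
  exact one_ne_zero h2

lemma X_ne_zero_A2 (i : Fin 2) : (MvPowerSeries.X i : A2) ≠ 0 := by
  have := X_pow_ne_zero_A2 i 1
  rwa [pow_one] at this

lemma projDiff_zero' (f : Fin 5 → A5) : projDiff N f 0 = toTwoVars N (f 0) := by
  simp [projDiff]

lemma projDiff_one' (f : Fin 5 → A5) : projDiff N f 1 = toTwoVars N (f 4) := by
  simp [projDiff]

lemma sN_one' : sN N 1 = (MvPowerSeries.X 0 : A2) ^ (N 1 - 2) := by simp [sN]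
lemma sN_two' : sN N 2 = (MvPowerSeries.X 0 : A2) ^ (N 2 - 2) := by simp [sN]
lemma sN_three' : sN N 3 = (MvPowerSeries.X 0 : A2) ^ (N 3 - 2) := by simp [sN]
lemma sN_four' : sN N 4 = (MvPowerSeries.X 1 : A2) := by simp [sN]

lemma isDiff2_proj (hN0 : N 0 = 3) (hN1 : N 1 = 3) (hN2 : N 2 = 3) (hN3 : N 3 = 4)
    {f : Fin 5 → A5} (hf : IsDiff5 f) : IsDiff2 (projDiff N f) := by
  have hs := zconst_sN hN0 hN1 hN2 hN3
  intro b
  rcases fin2_cases b with rfl | rfl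
  · obtain ⟨u, hu, hf0⟩ := hf 0
    refine ⟨toTwoVars N u, by rw [toTwoVars_eq, constantCoeff_gsubst hs, hu], ?_⟩
    rw [projDiff_zero', hf0, toTwoVars_eq, gsubst_mul hs, gsubst_X hs, sN_zero hN0]
    rfl
  · obtain ⟨u, hu, hf4⟩ := hf 4
    refine ⟨toTwoVars N u, by rw [toTwoVars_eq, constantCoeff_gsubst hs, hu], ?_⟩
    rw [projDiff_one', hf4, toTwoVars_eq, gsubst_mul hs, gsubst_X hs, sN_four']
    rfl

lemma isDiffI_comp {f g : Fin 5 → A5} (hf : IsDiffI N f) (hg : IsDiffI N g) :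
    IsDiffI N (compDiff5 f g) := by
  have hzg := zconst_of_isDiff5 hg.1
  constructor
  · intro j
    obtain ⟨u, hu, hfj⟩ := hf.1 j
    obtain ⟨v, hv, hgj⟩ := hg.1 j
    refine ⟨v * gsubst u g, ?_, ?_⟩
    · rw [map_mul, hv, constantCoeff_gsubst hzg, hu, one_mul]
    · show subst5 (f j) g = _
      rw [subst5_eq, hfj, gsubst_mul hzg, gsubst_X hzg, hgj]
      ring
  · intro x hx
    show subst5 x (compDiff5 f g) ∈ idealI N
    rw [subst5_eq]
    have hcomp : compDiff5 f g = fun j => gsubst (f j) g := rfl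
    rw [hcomp, gsubst_comp (zconst_of_isDiff5 hf.1) hzg]
    exact hg.2 _ (hf.2 x hx)

lemma zconst_proj (hN0 : N 0 = 3) (hN1 : N 1 = 3) (hN2 : N 2 = 3) (hN3 : N 3 = 4)
    {g : Fin 5 → A5} (hzg : Zconst g) : Zconst (projDiff N g) := by
  have hs := zconst_sN hN0 hN1 hN2 hN3
  intro b
  rcases fin2_cases b with rfl | rfl
  · rw [projDiff_zero', toTwoVars_eq, constantCoeff_gsubst hs]; exact hzg 0
  · rw [projDiff_one', toTwoVars_eq, constantCoeff_gsubst hs]; exact hzg 4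

lemma proj_comp (hN0 : N 0 = 3) (hN1 : N 1 = 3) (hN2 : N 2 = 3) (hN3 : N 3 = 4)
    {f g : Fin 5 → A5} (hf : IsDiffI N f) (hg : IsDiffI N g) :
    projDiff N (compDiff5 f g) = compDiff2 (projDiff N f) (projDiff N g) := by
  have hs := zconst_sN hN0 hN1 hN2 hN3
  have hzf := zconst_of_isDiff5 hf.1
  have hzg := zconst_of_isDiff5 hg.1
  have hzpg := zconst_proj hN0 hN1 hN2 hN3 hzg
  have key : (fun j => gsubst (g j) (sN N)) =
      fun j => gsubst (sN N j) (projDiff N g) := by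
    funext j
    rcases fin5_cases j with rfl | rfl | rfl | rfl | rfl
    · rw [sN_zero hN0, gsubst_X hzpg, projDiff_zero', toTwoVars_eq]
    · rw [sN_one', hN1, pow_one, gsubst_X hzpg, projDiff_zero', toTwoVars_eq]
      have hmem : g 1 - g 0 ∈ idealI N := by
        have hI := hg.2 _ (gen_mem 1 (by simp))
        rw [subst5_eq, gsubst_sub hzg, gsubst_pow hzg, gsubst_X hzg, gsubst_X hzg,
          hN1, pow_one] at hI
        exact hI
      have h0 := toTwoVars_of_mem_ideal hN0 hN1 hN2 hN3 hmem
      rw [toTwoVars_eq, gsubst_sub hs] at h0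
      exact sub_eq_zero.mp h0
    · rw [sN_two', hN2, pow_one, gsubst_X hzpg, projDiff_zero', toTwoVars_eq]
      have hmem : g 2 - g 0 ∈ idealI N := by
        have hI := hg.2 _ (gen_mem 2 (by simp))
        rw [subst5_eq, gsubst_sub hzg, gsubst_pow hzg, gsubst_X hzg, gsubst_X hzg,
          hN2, pow_one] at hI
        exact hI
      have h0 := toTwoVars_of_mem_ideal hN0 hN1 hN2 hN3 hmem
      rw [toTwoVars_eq, gsubst_sub hs] at h0
      exact sub_eq_zero.mp h0
    · rw [sN_three', gsubst_pow hzpg, gsubst_X hzpg, projDiff_zero', toTwoVars_eq,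
        ← gsubst_pow hs]
      have hmem : g 3 - g 0 ^ (N 3 - 2) ∈ idealI N := by
        have hI := hg.2 _ (gen_mem 3 (by simp))
        rw [subst5_eq, gsubst_sub hzg, gsubst_pow hzg, gsubst_X hzg, gsubst_X hzg] at hI
        exact hI
      have h0 := toTwoVars_of_mem_ideal hN0 hN1 hN2 hN3 hmem
      rw [toTwoVars_eq, gsubst_sub hs] at h0
      exact sub_eq_zero.mp h0
    · rw [sN_four', gsubst_X hzpg, projDiff_one', toTwoVars_eq]
  funext b
  rcases fin2_cases b with rfl | rfl
  · rw [projDiff_zero']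
    show toTwoVars N (subst5 (f 0) g) = subst2 (projDiff N f 0) (projDiff N g)
    rw [toTwoVars_eq, subst5_eq, subst2_eq, projDiff_zero', toTwoVars_eq,
      ← gsubst_comp hzg hs, key, gsubst_comp hs hzpg]
  · rw [projDiff_one']
    show toTwoVars N (subst5 (f 4) g) = subst2 (projDiff N f 1) (projDiff N g)
    rw [toTwoVars_eq, subst5_eq, subst2_eq, projDiff_one', toTwoVars_eq,
      ← gsubst_comp hzg hs, key, gsubst_comp hs hzpg]

lemma kernel_iff (hN0 : N 0 = 3) (hN1 : N 1 = 3) (hN2 : N 2 = 3) (hN3 : N 3 = 4)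
    {f : Fin 5 → A5} (hf : IsDiffI N f) :
    (projDiff N f = fun b => MvPowerSeries.X b) ↔
      ∀ j, ∃ B ∈ idealI N, f j = MvPowerSeries.X j * (1 + B) := by
  have hs := zconst_sN hN0 hN1 hN2 hN3
  have hzf := zconst_of_isDiff5 hf.1
  constructor
  · intro hproj
    have hT0 : toTwoVars N (f 0) = MvPowerSeries.X 0 := by
      have h := congrFun hproj 0
      rwa [projDiff_zero'] at h
    have hT4 : toTwoVars N (f 4) = MvPowerSeries.X 1 := by
      have h := congrFun hproj 1
      rwa [projDiff_one'] at h
    have main : ∀ j : Fin 5, gsubst (f j) (sN N) = gsubst (MvPowerSeries.X j) (sN N) →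
        ∃ B ∈ idealI N, f j = MvPowerSeries.X j * (1 + B) := by
      intro j hj
      obtain ⟨u, hu, hfj⟩ := hf.1 j
      rw [hfj, gsubst_mul hs] at hj
      have hXne : gsubst (MvPowerSeries.X j) (sN N) ≠ 0 := by
        rw [gsubst_X hs]
        rcases fin5_cases j with rfl | rfl | rfl | rfl | rfl
        · rw [sN_zero hN0]; exact X_ne_zero_A2 0
        · rw [sN_one']; exact X_pow_ne_zero_A2 0 _
        · rw [sN_two']; exact X_pow_ne_zero_A2 0 _
        · rw [sN_three']; exact X_pow_ne_zero_A2 0 _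
        · rw [sN_four']; exact X_ne_zero_A2 1
      have hu1 : gsubst u (sN N) = 1 :=
        mul_left_cancel₀ hXne (hj.trans (mul_one _).symm)
      refine ⟨u - 1, ?_, by rw [hfj]; ring⟩
      apply mem_ideal_of_toTwoVars_eq_zero hN0 hN1 hN2 hN3
      rw [toTwoVars_eq, gsubst_sub hs, gsubst_one hs, hu1, sub_self]
    intro j
    rcases fin5_cases j with rfl | rfl | rfl | rfl | rfl
    · exact main 0 (by rw [gsubst_X hs, sN_zero hN0, ← toTwoVars_eq]; exact hT0)
    · apply main 1
      have hmem : f 1 - f 0 ^ (N 1 - 2) ∈ idealI N := by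
        have hI := hf.2 _ (gen_mem 1 (by simp))
        rwa [subst5_eq, gsubst_sub hzf, gsubst_pow hzf, gsubst_X hzf, gsubst_X hzf] at hI
      have h0 := toTwoVars_of_mem_ideal hN0 hN1 hN2 hN3 hmem
      rw [toTwoVars_eq, gsubst_sub hs, gsubst_pow hs, sub_eq_zero] at h0
      rw [h0, gsubst_X hs, sN_one', ← toTwoVars_eq, hT0]
    · apply main 2
      have hmem : f 2 - f 0 ^ (N 2 - 2) ∈ idealI N := by
        have hI := hf.2 _ (gen_mem 2 (by simp))
        rwa [subst5_eq, gsubst_sub hzf, gsubst_pow hzf, gsubst_X hzf, gsubst_X hzf] at hI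
      have h0 := toTwoVars_of_mem_ideal hN0 hN1 hN2 hN3 hmem
      rw [toTwoVars_eq, gsubst_sub hs, gsubst_pow hs, sub_eq_zero] at h0
      rw [h0, gsubst_X hs, sN_two', ← toTwoVars_eq, hT0]
    · apply main 3
      have hmem : f 3 - f 0 ^ (N 3 - 2) ∈ idealI N := by
        have hI := hf.2 _ (gen_mem 3 (by simp))
        rwa [subst5_eq, gsubst_sub hzf, gsubst_pow hzf, gsubst_X hzf, gsubst_X hzf] at hI
      have h0 := toTwoVars_of_mem_ideal hN0 hN1 hN2 hN3 hmem
      rw [toTwoVars_eq, gsubst_sub hs, gsubst_pow hs, sub_eq_zero] at h0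
      rw [h0, gsubst_X hs, sN_three', ← toTwoVars_eq, hT0]
    · exact main 4 (by rw [gsubst_X hs, sN_four', ← toTwoVars_eq]; exact hT4)
  · intro hB
    funext b
    rcases fin2_cases b with rfl | rfl
    · rw [projDiff_zero']
      obtain ⟨B, hBI, hf0⟩ := hB 0
      have hBz : gsubst B (sN N) = 0 := by
        rw [← toTwoVars_eq]
        exact toTwoVars_of_mem_ideal hN0 hN1 hN2 hN3 hBI
      rw [hf0, toTwoVars_eq, gsubst_mul hs, gsubst_add hs, gsubst_one hs,
        gsubst_X hs, sN_zero hN0, hBz, add_zero, mul_one]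
    · rw [projDiff_one']
      obtain ⟨B, hBI, hf4⟩ := hB 4
      have hBz : gsubst B (sN N) = 0 := by
        rw [← toTwoVars_eq]
        exact toTwoVars_of_mem_ideal hN0 hN1 hN2 hN3 hBI
      rw [hf4, toTwoVars_eq, gsubst_mul hs, gsubst_add hs, gsubst_one hs,
        gsubst_X hs, sN_four', hBz, add_zero, mul_one]

/-- inclusion of two-variable series into five variables -/
def rho : Fin 2 → A5 := fun b =>
  if b = 0 then MvPowerSeries.X 0 else MvPowerSeries.X 4

def iota (s : A2) : A5 := gsubst s rho

lemma rho_zero : rho 0 = MvPowerSeries.X 0 := by simp [rho]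
lemma rho_one : rho 1 = MvPowerSeries.X 4 := by simp [rho]

lemma zconst_rho : Zconst rho := by
  intro b
  rcases fin2_cases b with rfl | rfl
  · rw [rho_zero]; exact MvPowerSeries.constantCoeff_X 0
  · rw [rho_one]; exact MvPowerSeries.constantCoeff_X 4

variable (N) in
/-- the splitting section -/
def secMap (F : Fin 2 → A2) : Fin 5 → A5 := fun j =>
  if j = 4 then MvPowerSeries.X 4 * iota (shiftX 1 (F 1))
  else MvPowerSeries.X j * (iota (shiftX 0 (F 0))) ^ (N j - 2)

lemma secMap_four (F : Fin 2 → A2) :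
    secMap N F 4 = MvPowerSeries.X 4 * iota (shiftX 1 (F 1)) := by simp [secMap]

lemma secMap_lt (F : Fin 2 → A2) (j : Fin 5) (hj : j ≠ 4) :
    secMap N F j = MvPowerSeries.X j * (iota (shiftX 0 (F 0))) ^ (N j - 2) := by
  simp [secMap, hj]

lemma zconst_secMap (F : Fin 2 → A2) : Zconst (secMap N F) := by
  intro j
  by_cases hj : j = 4
  · subst hj
    rw [secMap_four, map_mul, MvPowerSeries.constantCoeff_X, zero_mul]
  · rw [secMap_lt F j hj, map_mul, MvPowerSeries.constantCoeff_X, zero_mul]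

lemma toTwoVars_iota (hN0 : N 0 = 3) (hN1 : N 1 = 3) (hN2 : N 2 = 3) (hN3 : N 3 = 4)
    (s : A2) : toTwoVars N (iota s) = s := by
  have hs := zconst_sN hN0 hN1 hN2 hN3
  rw [toTwoVars_eq, iota, ← gsubst_comp zconst_rho hs]
  have heq : (fun b => gsubst (rho b) (sN N)) = fun b : Fin 2 => MvPowerSeries.X b := by
    funext b
    rcases fin2_cases b with rfl | rfl
    · rw [rho_zero, gsubst_X hs, sN_zero hN0]
    · rw [rho_one, gsubst_X hs, sN_four']
  rw [heq, gsubst_id]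

lemma sec_isDiffI (hN0 : N 0 = 3) (hN1 : N 1 = 3) (hN2 : N 2 = 3) (hN3 : N 3 = 4)
    {F : Fin 2 → A2} (hF : IsDiff2 F) : IsDiffI N (secMap N F) := by
  obtain ⟨v0, hv0c, hF0⟩ := hF 0
  obtain ⟨v1, hv1c, hF1⟩ := hF 1
  have hsv0 : shiftX 0 (F 0) = v0 := by rw [hF0, shiftX_X_mul]
  have hsv1 : shiftX 1 (F 1) = v1 := by rw [hF1, shiftX_X_mul]
  constructor
  · intro j
    by_cases hj : j = 4
    · subst hj
      refine ⟨iota v1, ?_, by rw [secMap_four, hsv1]⟩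
      rw [iota, constantCoeff_gsubst zconst_rho, hv1c]
    · refine ⟨(iota v0) ^ (N j - 2), ?_, by rw [secMap_lt F j hj, hsv0]⟩
      rw [map_pow, iota, constantCoeff_gsubst zconst_rho, hv0c, one_pow]
  · intro x hx
    have hzs : Zconst (secMap N F) := zconst_secMap F
    show subst5 x (secMap N F) ∈ idealI N
    rw [subst5_eq]
    refine Submodule.span_induction ?_ ?_ ?_ ?_ hx
    · rintro y ⟨i, hi, rfl⟩
      rw [gsubst_sub hzs, gsubst_pow hzs, gsubst_X hzs, gsubst_X hzs]
      have hsec0 : secMap N F 0 = MvPowerSeries.X 0 * iota (shiftX 0 (F 0)) := by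
        rw [secMap_lt F 0 (by decide), hN0, pow_one]
      simp only [Set.mem_insert_iff, Set.mem_singleton_iff] at hi
      have hstep : ∀ i' : Fin 5, i' ≠ 4 →
          (MvPowerSeries.X i' - (MvPowerSeries.X 0 : A5) ^ (N i' - 2)) ∈ idealI N →
          secMap N F i' - secMap N F 0 ^ (N i' - 2) ∈ idealI N := by
        intro i' hi' hmem
        rw [secMap_lt F i' hi', hsec0, mul_pow, ← sub_mul]
        exact Ideal.mul_mem_right _ _ hmem
      rcases hi with rfl | rfl | rfl
      · exact hstep 1 (by decide) (gen_mem 1 (by simp))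
      · exact hstep 2 (by decide) (gen_mem 2 (by simp))
      · exact hstep 3 (by decide) (gen_mem 3 (by simp))
    · rw [gsubst_zero hzs]
      exact Ideal.zero_mem _
    · intro a b _ _ ha hb
      rw [gsubst_add hzs]
      exact Ideal.add_mem _ ha hb
    · intro a y _ hy
      rw [smul_eq_mul, gsubst_mul hzs]
      exact Ideal.mul_mem_left _ _ hy

lemma sec_proj (hN0 : N 0 = 3) (hN1 : N 1 = 3) (hN2 : N 2 = 3) (hN3 : N 3 = 4)
    {F : Fin 2 → A2} (hF : IsDiff2 F) : projDiff N (secMap N F) = F := by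
  have hs := zconst_sN hN0 hN1 hN2 hN3
  obtain ⟨v0, hv0c, hF0⟩ := hF 0
  obtain ⟨v1, hv1c, hF1⟩ := hF 1
  have hsv0 : shiftX 0 (F 0) = v0 := by rw [hF0, shiftX_X_mul]
  have hsv1 : shiftX 1 (F 1) = v1 := by rw [hF1, shiftX_X_mul]
  funext b
  rcases fin2_cases b with rfl | rfl
  · rw [projDiff_zero', secMap_lt F 0 (by decide), hsv0, hN0, pow_one, toTwoVars_eq,
      gsubst_mul hs, gsubst_X hs, sN_zero hN0, ← toTwoVars_eq,
      toTwoVars_iota hN0 hN1 hN2 hN3, hF0]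
  · rw [projDiff_one', secMap_four, hsv1, toTwoVars_eq,
      gsubst_mul hs, gsubst_X hs, sN_four', ← toTwoVars_eq,
      toTwoVars_iota hN0 hN1 hN2 hN3, hF1]

lemma iota_mul (a b : A2) : iota (a * b) = iota a * iota b := gsubst_mul zconst_rho

lemma sec_key (hN0 : N 0 = 3) {G : Fin 2 → A2} (hG : IsDiff2 G) (s : A2) :
    gsubst (iota s) (secMap N G) = iota (gsubst s G) := by
  have hzG := zconst_of_isDiff2 hG
  have hzs : Zconst (secMap N G) := zconst_secMap G
  obtain ⟨w0, hw0c, hG0⟩ := hG 0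
  obtain ⟨w1, hw1c, hG1⟩ := hG 1
  have hsw0 : shiftX 0 (G 0) = w0 := by rw [hG0, shiftX_X_mul]
  have hsw1 : shiftX 1 (G 1) = w1 := by rw [hG1, shiftX_X_mul]
  rw [iota, ← gsubst_comp zconst_rho hzs]
  rw [show iota (gsubst s G) = gsubst (gsubst s G) rho from rfl,
    ← gsubst_comp hzG zconst_rho]
  have heq : (fun b => gsubst (rho b) (secMap N G)) = fun b => gsubst (G b) rho := by
    funext b
    rcases fin2_cases b with rfl | rfl
    · rw [rho_zero, gsubst_X hzs, secMap_lt G 0 (by decide), hsw0, hN0, pow_one, hG0,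
        gsubst_mul zconst_rho, gsubst_X zconst_rho, rho_zero]
      rfl
    · rw [rho_one, gsubst_X hzs, secMap_four, hsw1, hG1,
        gsubst_mul zconst_rho, gsubst_X zconst_rho, rho_one]
      rfl
  rw [heq]

lemma sec_mul (hN0 : N 0 = 3) {F G : Fin 2 → A2} (hF : IsDiff2 F) (hG : IsDiff2 G) :
    secMap N (compDiff2 F G) = compDiff5 (secMap N F) (secMap N G) := by
  have hzG := zconst_of_isDiff2 hG
  have hzsG : Zconst (secMap N G) := zconst_secMap G
  obtain ⟨v0, hv0c, hF0⟩ := hF 0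
  obtain ⟨v1, hv1c, hF1⟩ := hF 1
  obtain ⟨w0, hw0c, hG0⟩ := hG 0
  obtain ⟨w1, hw1c, hG1⟩ := hG 1
  have hsv0 : shiftX 0 (F 0) = v0 := by rw [hF0, shiftX_X_mul]
  have hsv1 : shiftX 1 (F 1) = v1 := by rw [hF1, shiftX_X_mul]
  have hsw0 : shiftX 0 (G 0) = w0 := by rw [hG0, shiftX_X_mul]
  have hsw1 : shiftX 1 (G 1) = w1 := by rw [hG1, shiftX_X_mul]
  have hc0 : compDiff2 F G 0 = MvPowerSeries.X 0 * (w0 * gsubst v0 G) := by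
    show subst2 (F 0) G = _
    rw [subst2_eq, hF0, gsubst_mul hzG, gsubst_X hzG, hG0]
    ring
  have hc1 : compDiff2 F G 1 = MvPowerSeries.X 1 * (w1 * gsubst v1 G) := by
    show subst2 (F 1) G = _
    rw [subst2_eq, hF1, gsubst_mul hzG, gsubst_X hzG, hG1]
    ring
  funext j
  by_cases hj : j = 4
  · subst hj
    show secMap N (compDiff2 F G) 4 = subst5 (secMap N F 4) (secMap N G)
    rw [secMap_four, hc1, shiftX_X_mul, subst5_eq, secMap_four, hsv1,
      gsubst_mul hzsG, gsubst_X hzsG, sec_key hN0 hG v1, secMap_four, hsw1,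
      iota_mul]
    ring
  · show secMap N (compDiff2 F G) j = subst5 (secMap N F j) (secMap N G)
    rw [secMap_lt _ j hj, hc0, shiftX_X_mul, subst5_eq, secMap_lt F j hj, hsv0,
      gsubst_mul hzsG, gsubst_pow hzsG, gsubst_X hzsG, sec_key hN0 hG v0,
      secMap_lt G j hj, hsw0, iota_mul, mul_pow]
    ring

end Specific

end SESAux

/-- there is a short exact sequence
`1 → (1+I)⁵ → Diff(ℂ⁵,0)^I → Diff(ℂ²,0) → 1`, where the kernel consists of the
diffeomorphisms `f(λ_j) = λ_j(1 + B_j)` with `B_j ∈ I`, the surjection is induced by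
the quotient `ℂ[[λ₁,…,λ₅]]/I ≅ ℂ[[g,λ₅]]`, and the sequence splits. -/
theorem diffI_short_exact_sequence
    (N : Fin 5 → ℕ) (hN0 : N 0 = 3) (hN1 : N 1 = 3) (hN2 : N 2 = 3) (hN3 : N 3 = 4) :
    -- `Diff(ℂ⁵,0)^I` maps into `Diff(ℂ²,0)`, multiplicatively
    (∀ f, IsDiffI N f → IsDiff2 (projDiff N f)) ∧
    (∀ f g, IsDiffI N f → IsDiffI N g →
      IsDiffI N (compDiff5 f g) ∧
      projDiff N (compDiff5 f g) = compDiff2 (projDiff N f) (projDiff N g)) ∧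
    -- the kernel is `(1+I)⁵`
    (∀ f, IsDiffI N f →
      ((projDiff N f = fun b => MvPowerSeries.X b) ↔
        ∀ j, ∃ B ∈ idealI N, f j = MvPowerSeries.X j * (1 + B))) ∧
    -- surjectivity, with a multiplicative (group-homomorphism) splitting
    (∃ sec : (Fin 2 → A2) → (Fin 5 → A5),
      (∀ F, IsDiff2 F → IsDiffI N (sec F) ∧ projDiff N (sec F) = F) ∧
      (∀ F G, IsDiff2 F → IsDiff2 G →
        sec (compDiff2 F G) = compDiff5 (sec F) (sec G))) := by
  refine ⟨?_, ?_, ?_, ?_⟩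
  · intro f hf
    exact SESAux.isDiff2_proj hN0 hN1 hN2 hN3 hf.1
  · intro f g hf hg
    exact ⟨SESAux.isDiffI_comp hf hg, SESAux.proj_comp hN0 hN1 hN2 hN3 hf hg⟩
  · intro f hf
    exact SESAux.kernel_iff hN0 hN1 hN2 hN3 hf
  · refine ⟨SESAux.secMap N, fun F hF => ⟨SESAux.sec_isDiffI hN0 hN1 hN2 hN3 hF,
      SESAux.sec_proj hN0 hN1 hN2 hN3 hF⟩, fun F G hF hG => SESAux.sec_mul hN0 hF hG⟩
end
end

section
/- Let H be a connected graded commutative Hopf algebra over ℂ, J ⊆ H a Hopf ideal, and K a commutative ℂ-algebra with a Rota–Baxter splitting K = K_- ⊕ K_+ as in the Birkhoff decomposition. If γ : H → K is a character with γ(J) = 0, then both components γ_- and γ_+ of its Birkhoff decomposition also vanish on J. In particular, γ factors through H/J and its Birkhoff decomposition in the character group of H/J pulls back to that of H. -/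
open TensorProduct

open scoped DirectSum

namespace Birkhoff9

variable {M N : Type*} [AddCommGroup M] [Module ℂ M] [AddCommGroup N] [Module ℂ N]

lemma range_map_induction (A : Submodule ℂ M) (B : Submodule ℂ N) {P : M ⊗[ℂ] N → Prop}
    (h0 : P 0) (hp : ∀ a ∈ A, ∀ b ∈ B, P (a ⊗ₜ[ℂ] b))
    (hadd : ∀ u v, P u → P v → P (u + v)) :
    ∀ z ∈ LinearMap.range (TensorProduct.map A.subtype B.subtype), P z := by
  rintro _ ⟨w, rfl⟩
  induction w using TensorProduct.induction_on with
  | zero => simpa using h0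
  | tmul a b => simpa using hp a a.2 b b.2
  | add u v hu hv => rw [map_add]; exact hadd _ _ hu hv

lemma range_map_mono {A A' : Submodule ℂ M} {B B' : Submodule ℂ N} (hA : A ≤ A') (hB : B ≤ B') :
    LinearMap.range (TensorProduct.map A.subtype B.subtype) ≤
      LinearMap.range (TensorProduct.map A'.subtype B'.subtype) := fun z hz =>
  range_map_induction A B (P := fun z => z ∈ LinearMap.range (TensorProduct.map A'.subtype B'.subtype)) (zero_mem _)
    (fun a ha b hb => ⟨⟨a, hA ha⟩ ⊗ₜ ⟨b, hB hb⟩, by simp⟩)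
    (fun u v hu hv => add_mem hu hv) z hz

/-- Existence of a projection-like map killing `U`, with `id - p` valued in `U`,
preserving `F`. -/
lemma exists_proj (U F : Submodule ℂ M) :
    ∃ p : M →ₗ[ℂ] M, (∀ u ∈ U, p u = 0) ∧ (∀ x : M, x - p x ∈ U) ∧ (∀ f ∈ F, p f ∈ F) := by
  obtain ⟨C₀, hC₀⟩ := Submodule.exists_isCompl ((U ⊓ F).comap F.subtype)
  set C : Submodule ℂ M := C₀.map F.subtype with hCdef
  have hCF : C ≤ F := by rintro x ⟨y, _, rfl⟩; exact y.2
  have hCU : ∀ x ∈ C, x ∈ U → x = 0 := by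
    rintro x ⟨y, hy, rfl⟩ hxU
    have h1 : y ∈ (U ⊓ F).comap F.subtype := by
      simp only [Submodule.mem_comap, Submodule.mem_inf]
      exact ⟨hxU, y.2⟩
    have := hC₀.disjoint.le_bot ⟨h1, hy⟩
    rw [Submodule.mem_bot] at this
    rw [this]; rfl
  have hCsup : ∀ f ∈ F, ∃ u ∈ U ⊓ F, ∃ c ∈ C, f = u + c := by
    intro f hf
    have : (⟨f, hf⟩ : F) ∈ ((U ⊓ F).comap F.subtype) ⊔ C₀ := by
      rw [hC₀.codisjoint.eq_top]; trivial
    obtain ⟨y, hy, z, hz, hyz⟩ := Submodule.mem_sup.mp this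
    refine ⟨y, hy, z, ⟨z, hz, rfl⟩, ?_⟩
    have := congrArg (Subtype.val) hyz
    simpa using this.symm
  obtain ⟨D, hD⟩ := Submodule.exists_isCompl (U ⊔ C)
  set W : Submodule ℂ M := C ⊔ D with hWdef
  have hWU : IsCompl W U := by
    constructor
    · rw [disjoint_comm, Submodule.disjoint_def]
      intro x hxU hxW
      obtain ⟨c, hc, d, hd, rfl⟩ := Submodule.mem_sup.mp hxW
      have hdUC : d ∈ U ⊔ C := by
        have h' : d = (c + d) - c := by abel
        rw [h']
        exact sub_mem (Submodule.mem_sup_left hxU) (Submodule.mem_sup_right hc)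
      have hd0 : d = 0 := by
        have := hD.disjoint.le_bot ⟨hdUC, hd⟩
        rwa [Submodule.mem_bot] at this
      rw [hd0, add_zero] at hxU ⊢
      exact hCU c hc hxU
    · rw [codisjoint_iff]
      rw [sup_comm, hWdef, ← sup_assoc]
      rw [sup_comm U C] at hD ⊢
      exact hD.codisjoint.eq_top
  refine ⟨W.subtype ∘ₗ Submodule.linearProjOfIsCompl W U hWU, ?_, ?_, ?_⟩
  · intro u hu
    simp [Submodule.linearProjOfIsCompl_apply_right' hWU hu]
    exact Submodule.linearProjOfIsCompl_apply_right' hWU hu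
  · intro x
    have h := Submodule.projection_add_projection_eq_self hWU x
    have : x - (W.subtype ∘ₗ Submodule.linearProjOfIsCompl W U hWU) x =
        (Submodule.linearProjOfIsCompl U W hWU.symm x : M) := by
      simp only [LinearMap.comp_apply, Submodule.coe_subtype]
      rw [sub_eq_iff_eq_add, add_comm]
      exact h.symm
    rw [this]
    exact (Submodule.linearProjOfIsCompl U W hWU.symm x).2
  · intro f hf
    obtain ⟨u, hu, c, hc, rfl⟩ := hCsup f hf
    have hcW : c ∈ W := Submodule.mem_sup_left hc
    have h1 : (Submodule.linearProjOfIsCompl W U hWU) u = 0 :=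
      Submodule.linearProjOfIsCompl_apply_right' hWU hu.1
    have h2 : (Submodule.linearProjOfIsCompl W U hWU) c = ⟨c, hcW⟩ :=
      Submodule.linearProjOfIsCompl_apply_left hWU ⟨c, hcW⟩
    simp only [LinearMap.comp_apply, map_add, h1, h2, Submodule.coe_subtype,
      ZeroMemClass.coe_zero, zero_add]
    exact hCF hc

/-- Intersection lemma: an element of `U ⊗ M + M ⊗ U` that lies in `F ⊗ F`
lies in `(U ⊓ F) ⊗ F + F ⊗ (U ⊓ F)`. -/
lemma inter_lemma (U F : Submodule ℂ M) (z : M ⊗[ℂ] M)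
    (hz : z ∈ LinearMap.range (TensorProduct.map U.subtype (LinearMap.id : M →ₗ[ℂ] M)) ⊔
        LinearMap.range (TensorProduct.map (LinearMap.id : M →ₗ[ℂ] M) U.subtype))
    (hzF : z ∈ LinearMap.range (TensorProduct.map F.subtype F.subtype)) :
    z ∈ LinearMap.range (TensorProduct.map (U ⊓ F).subtype F.subtype) ⊔
        LinearMap.range (TensorProduct.map F.subtype (U ⊓ F).subtype) := by
  obtain ⟨p, hpU, hpid, hpF⟩ := exists_proj U F
  have hppz : TensorProduct.map p p z = 0 := by
    obtain ⟨z₁, hz₁, z₂, hz₂, rfl⟩ := Submodule.mem_sup.mp hz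
    obtain ⟨w₁, rfl⟩ := hz₁
    obtain ⟨w₂, rfl⟩ := hz₂
    rw [map_add]
    have h1 : ∀ w : U ⊗[ℂ] M,
        TensorProduct.map p p (TensorProduct.map U.subtype LinearMap.id w) = 0 := by
      intro w
      induction w using TensorProduct.induction_on with
      | zero => simp
      | tmul a b => simp [hpU a a.2]
      | add u v hu hv => rw [map_add, map_add, hu, hv, add_zero]
    have h2 : ∀ w : M ⊗[ℂ] U,
        TensorProduct.map p p (TensorProduct.map LinearMap.id U.subtype w) = 0 := by
      intro w
      induction w using TensorProduct.induction_on with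
      | zero => simp
      | tmul a b => simp [hpU b b.2]
      | add u v hu hv => rw [map_add, map_add, hu, hv, add_zero]
    rw [h1, h2, add_zero]
  obtain ⟨w, rfl⟩ := hzF
  have hmain : ∀ w : F ⊗[ℂ] F,
      (TensorProduct.map F.subtype F.subtype w -
        TensorProduct.map p LinearMap.id (TensorProduct.map F.subtype F.subtype w) ∈
          LinearMap.range (TensorProduct.map (U ⊓ F).subtype F.subtype)) ∧
      (TensorProduct.map p LinearMap.id (TensorProduct.map F.subtype F.subtype w) -
        TensorProduct.map p p (TensorProduct.map F.subtype F.subtype w) ∈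
          LinearMap.range (TensorProduct.map F.subtype (U ⊓ F).subtype)) := by
    intro w
    induction w using TensorProduct.induction_on with
    | zero => simp
    | tmul a b =>
      constructor
      · have he : TensorProduct.map F.subtype F.subtype (a ⊗ₜ[ℂ] b) -
            TensorProduct.map p LinearMap.id (TensorProduct.map F.subtype F.subtype (a ⊗ₜ[ℂ] b)) =
            ((a : M) - p a) ⊗ₜ[ℂ] (b : M) := by
          simp [TensorProduct.sub_tmul]
        rw [he]
        have hmem : (a : M) - p a ∈ U ⊓ F :=
          ⟨hpid a, sub_mem a.2 (hpF a a.2)⟩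
        exact ⟨⟨(a : M) - p a, hmem⟩ ⊗ₜ ⟨(b : M), b.2⟩, by simp⟩
      · have he : TensorProduct.map p LinearMap.id (TensorProduct.map F.subtype F.subtype (a ⊗ₜ[ℂ] b)) -
            TensorProduct.map p p (TensorProduct.map F.subtype F.subtype (a ⊗ₜ[ℂ] b)) =
            (p a) ⊗ₜ[ℂ] ((b : M) - p b) := by
          simp [TensorProduct.tmul_sub]
        rw [he]
        have hmem : (b : M) - p b ∈ U ⊓ F :=
          ⟨hpid b, sub_mem b.2 (hpF b b.2)⟩
        exact ⟨⟨p a, hpF a a.2⟩ ⊗ₜ ⟨(b : M) - p b, hmem⟩, by simp⟩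
    | add u v hu hv =>
      constructor
      · have he : TensorProduct.map F.subtype F.subtype (u + v) -
            TensorProduct.map p LinearMap.id (TensorProduct.map F.subtype F.subtype (u + v)) =
            (TensorProduct.map F.subtype F.subtype u -
              TensorProduct.map p LinearMap.id (TensorProduct.map F.subtype F.subtype u)) +
            (TensorProduct.map F.subtype F.subtype v -
              TensorProduct.map p LinearMap.id (TensorProduct.map F.subtype F.subtype v)) := by
          rw [map_add, map_add]; abel
        rw [he]; exact add_mem hu.1 hv.1
      · have he : TensorProduct.map p LinearMap.id (TensorProduct.map F.subtype F.subtype (u + v)) -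
            TensorProduct.map p p (TensorProduct.map F.subtype F.subtype (u + v)) =
            (TensorProduct.map p LinearMap.id (TensorProduct.map F.subtype F.subtype u) -
              TensorProduct.map p p (TensorProduct.map F.subtype F.subtype u)) +
            (TensorProduct.map p LinearMap.id (TensorProduct.map F.subtype F.subtype v) -
              TensorProduct.map p p (TensorProduct.map F.subtype F.subtype v)) := by
          rw [map_add, map_add, map_add]; abel
        rw [he]; exact add_mem hu.2 hv.2
  have h3 := (hmain w).1
  have h4 := (hmain w).2
  rw [hppz, sub_zero] at h4
  have hdec : TensorProduct.map F.subtype F.subtype w =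
      (TensorProduct.map F.subtype F.subtype w -
        TensorProduct.map p LinearMap.id (TensorProduct.map F.subtype F.subtype w)) +
      TensorProduct.map p LinearMap.id (TensorProduct.map F.subtype F.subtype w) := by abel
  rw [hdec]
  exact Submodule.add_mem_sup h3 h4

section Key

open Coalgebra HopfAlgebra

variable {H : Type*} [CommRing H] [HopfAlgebra ℂ H] {K : Type*} [CommRing K] [Algebra ℂ K]

lemma key_conv (γ γm γp : H →ₐ[ℂ] K)
    (hBirkhoff : ∀ x : H, γ x = LinearMap.mul' ℂ K
      (TensorProduct.map (γm.toLinearMap ∘ₗ HopfAlgebra.antipode (R := ℂ)) γp.toLinearMap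
        (Coalgebra.comul (R := ℂ) x))) (x : H) :
    γp x = LinearMap.mul' ℂ K (TensorProduct.map γm.toLinearMap γ.toLinearMap
      (Coalgebra.comul (R := ℂ) x)) := by
  have hexp : ∀ b : H, γ b = ∑ j ∈ (ℛ ℂ b).index,
      γm (HopfAlgebra.antipode (R := ℂ) ((ℛ ℂ b).left j)) * γp ((ℛ ℂ b).right j) := by
    intro b
    rw [hBirkhoff b, ← (ℛ ℂ b).eq, map_sum, map_sum]
    simp [LinearMap.mul'_apply]
  set r := ℛ ℂ x with hrdef
  have hT := congrArg (⇑(LinearMap.mul' ℂ K ∘ₗ TensorProduct.map γm.toLinearMap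
      (LinearMap.mul' ℂ K ∘ₗ TensorProduct.map
        (γm.toLinearMap ∘ₗ HopfAlgebra.antipode (R := ℂ)) γp.toLinearMap)))
    (Coalgebra.sum_tmul_tmul_eq r (fun i => ℛ ℂ (r.left i)) (fun i => ℛ ℂ (r.right i)))
  simp only [map_sum, LinearMap.comp_apply, TensorProduct.map_tmul, LinearMap.mul'_apply,
    AlgHom.toLinearMap_apply] at hT
  have hL : ∀ i, ∑ j ∈ (ℛ ℂ (r.left i)).index, γm ((ℛ ℂ (r.left i)).left j) *
      (γm (HopfAlgebra.antipode (R := ℂ) ((ℛ ℂ (r.left i)).right j)) * γp (r.right i)) =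
      Coalgebra.counit (R := ℂ) (r.left i) • γp (r.right i) := by
    intro i
    calc ∑ j ∈ (ℛ ℂ (r.left i)).index, γm ((ℛ ℂ (r.left i)).left j) *
        (γm (HopfAlgebra.antipode (R := ℂ) ((ℛ ℂ (r.left i)).right j)) * γp (r.right i))
        = (∑ j ∈ (ℛ ℂ (r.left i)).index, γm ((ℛ ℂ (r.left i)).left j *
            HopfAlgebra.antipode (R := ℂ) ((ℛ ℂ (r.left i)).right j))) * γp (r.right i) := by
          rw [Finset.sum_mul]
          refine Finset.sum_congr rfl fun j _ => ?_
          rw [map_mul, mul_assoc]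
      _ = γm (Coalgebra.counit (R := ℂ) (r.left i) • (1 : H)) * γp (r.right i) := by
          rw [← map_sum, HopfAlgebra.sum_mul_antipode_eq_smul]
      _ = Coalgebra.counit (R := ℂ) (r.left i) • γp (r.right i) := by
          rw [map_smul, map_one, smul_mul_assoc, one_mul]
  have hR : ∀ i, ∑ j ∈ (ℛ ℂ (r.right i)).index, γm (r.left i) *
      (γm (HopfAlgebra.antipode (R := ℂ) ((ℛ ℂ (r.right i)).left j)) *
        γp ((ℛ ℂ (r.right i)).right j)) = γm (r.left i) * γ (r.right i) := by
    intro i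
    rw [hexp (r.right i), Finset.mul_sum]
  rw [Finset.sum_congr rfl (fun i _ => hL i), Finset.sum_congr rfl (fun i _ => hR i)] at hT
  have hcounit : ∑ i ∈ r.index, Coalgebra.counit (R := ℂ) (r.left i) • r.right i = x := by
    have h2 := congrArg (⇑((TensorProduct.lid ℂ H).toLinearMap ∘ₗ
      LinearMap.rTensor H (Coalgebra.counit (R := ℂ)))) r.eq
    simp only [map_sum, LinearMap.comp_apply, LinearMap.rTensor_tmul,
      TensorProduct.lid_tmul, LinearEquiv.coe_coe] at h2
    rw [h2]
    rw [show LinearMap.rTensor H (Coalgebra.counit (R := ℂ)) (Coalgebra.comul (R := ℂ) x)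
        = (1 : ℂ) ⊗ₜ[ℂ] x from Coalgebra.rTensor_counit_comul x]
    simp
  have hfinal : γp x = ∑ i ∈ r.index, γm (r.left i) * γ (r.right i) := by
    conv_lhs => rw [← hcounit]
    rw [map_sum, ← hT]
    refine Finset.sum_congr rfl fun i _ => ?_
    rw [map_smul]
  rw [hfinal, ← r.eq, map_sum, map_sum]
  simp [LinearMap.mul'_apply]

end Key

section Graded

variable {H : Type*} [CommRing H] [HopfAlgebra ℂ H]

lemma reduced_comul (ℬ : ℕ → Submodule ℂ H) (hinternal : DirectSum.IsInternal ℬ)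
    (hconn : ℬ 0 = (1 : Submodule ℂ H))
    (hcomul : ∀ n : ℕ, ∀ x ∈ ℬ n, Coalgebra.comul (R := ℂ) x ∈
        ⨆ (p : ℕ × ℕ) (_ : p.1 + p.2 = n),
          LinearMap.range (TensorProduct.map (ℬ p.1).subtype (ℬ p.2).subtype))
    (n : ℕ) (x : H) (hx : x ∈ ⨆ k, ⨆ (_ : k ≤ n + 1), ℬ k) :
    Coalgebra.comul (R := ℂ) x - x ⊗ₜ[ℂ] (1 : H) - (1 : H) ⊗ₜ[ℂ] x ∈
      LinearMap.range (TensorProduct.map (⨆ k, ⨆ (_ : k ≤ n), ℬ k).subtype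
        (⨆ k, ⨆ (_ : k ≤ n), ℬ k).subtype) := by
  classical
  set F : Submodule ℂ H := ⨆ k, ⨆ (_ : k ≤ n), ℬ k with hF
  have hone : (1 : H) ∈ ℬ 0 := by rw [hconn]; exact Submodule.one_le.mp le_rfl
  have hBF : ∀ k, k ≤ n → ℬ k ≤ F := fun k hk => le_iSup_of_le k (le_iSup_of_le hk le_rfl)
  have honeF : (1 : H) ∈ F := hBF 0 (Nat.zero_le n) hone
  -- the projections coming from the internal grading
  set e : (⨁ i, ↥(ℬ i)) ≃ₗ[ℂ] H :=
    LinearEquiv.ofBijective (DirectSum.coeLinearMap ℬ) hinternal with he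
  set π : ℕ → (H →ₗ[ℂ] H) := fun m => (ℬ m).subtype ∘ₗ
    (DirectSum.component ℂ ℕ (fun i => ℬ i) m) ∘ₗ (e.symm : H →ₗ[ℂ] (⨁ i, ↥(ℬ i))) with hπ
  have hπ_same : ∀ m (y : H), y ∈ ℬ m → π m y = y := by
    intro m y hy
    have h1 : e.symm y m = ⟨y, hy⟩ := hinternal.ofBijective_coeLinearMap_of_mem hy
    show ((ℬ m).subtype) ((DirectSum.component ℂ ℕ (fun i => ℬ i) m) (e.symm y)) = y
    rw [← DirectSum.apply_eq_component, h1]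
    rfl
  have hπ_ne : ∀ m p (y : H), p ≠ m → y ∈ ℬ p → π m y = 0 := by
    intro m p y hpm hy
    have h1 : e.symm y m = 0 := hinternal.ofBijective_coeLinearMap_of_mem_ne hpm hy
    show ((ℬ m).subtype) ((DirectSum.component ℂ ℕ (fun i => ℬ i) m) (e.symm y)) = 0
    rw [← DirectSum.apply_eq_component, h1]
    rfl
  -- the two counit contractions
  set Λ₁ : H ⊗[ℂ] H →ₗ[ℂ] H := (TensorProduct.rid ℂ H).toLinearMap ∘ₗ
    LinearMap.lTensor H (Coalgebra.counit (R := ℂ)) with hΛ₁def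
  set Λ₂ : H ⊗[ℂ] H →ₗ[ℂ] H := (TensorProduct.lid ℂ H).toLinearMap ∘ₗ
    LinearMap.rTensor H (Coalgebra.counit (R := ℂ)) with hΛ₂def
  have hΛ₁tmul : ∀ a b : H, Λ₁ (a ⊗ₜ[ℂ] b) = Coalgebra.counit (R := ℂ) b • a := by
    intro a b; simp [hΛ₁def]
  have hΛ₂tmul : ∀ a b : H, Λ₂ (a ⊗ₜ[ℂ] b) = Coalgebra.counit (R := ℂ) a • b := by
    intro a b; simp [hΛ₂def]
  have hΛ₁comul : ∀ y : H, Λ₁ (Coalgebra.comul (R := ℂ) y) = y := by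
    intro y
    rw [hΛ₁def]
    simp only [LinearMap.comp_apply]
    rw [show LinearMap.lTensor H (Coalgebra.counit (R := ℂ)) (Coalgebra.comul (R := ℂ) y) =
      y ⊗ₜ[ℂ] (1 : ℂ) from Coalgebra.lTensor_counit_comul y]
    simp
  have hΛ₁mem : ∀ (A B : Submodule ℂ H), ∀ z ∈ LinearMap.range
      (TensorProduct.map A.subtype B.subtype), Λ₁ z ∈ A := by
    intro A B
    exact range_map_induction A B (P := fun z => Λ₁ z ∈ A) (by simp)
      (fun a ha b hb => by show Λ₁ (a ⊗ₜ[ℂ] b) ∈ A; rw [hΛ₁tmul]; exact Submodule.smul_mem _ _ ha)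
      (fun u v hu hv => by show Λ₁ (u + v) ∈ A; rw [map_add]; exact add_mem hu hv)
  have hΛ₂mem : ∀ (A B : Submodule ℂ H), ∀ z ∈ LinearMap.range
      (TensorProduct.map A.subtype B.subtype), Λ₂ z ∈ B := by
    intro A B
    exact range_map_induction A B (P := fun z => Λ₂ z ∈ B) (by simp)
      (fun a ha b hb => by show Λ₂ (a ⊗ₜ[ℂ] b) ∈ B; rw [hΛ₂tmul]; exact Submodule.smul_mem _ _ hb)
      (fun u v hu hv => by show Λ₂ (u + v) ∈ B; rw [map_add]; exact add_mem hu hv)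
  -- reduce to homogeneous components by linearity
  set L : H →ₗ[ℂ] H ⊗[ℂ] H := Coalgebra.comul - ((TensorProduct.mk ℂ H H).flip 1) -
    (TensorProduct.mk ℂ H H 1) with hLdef
  have hLapp : ∀ y : H, L y = Coalgebra.comul (R := ℂ) y - y ⊗ₜ[ℂ] (1 : H) -
      (1 : H) ⊗ₜ[ℂ] y := by
    intro y; simp [hLdef]
  suffices hsuff : (⨆ k, ⨆ (_ : k ≤ n + 1), ℬ k) ≤
      Submodule.comap L (LinearMap.range (TensorProduct.map F.subtype F.subtype)) by
    have h := hsuff hx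
    rw [Submodule.mem_comap, hLapp] at h
    exact h
  refine iSup_le fun k => iSup_le fun hk y hy => ?_
  rw [Submodule.mem_comap, hLapp]
  rcases Nat.eq_zero_or_pos k with hk0 | hkpos
  · subst hk0
    rw [hconn, Submodule.mem_one] at hy
    obtain ⟨c, rfl⟩ := hy
    rw [Algebra.algebraMap_eq_smul_one]
    have hc : Coalgebra.comul (R := ℂ) ((c : ℂ) • (1 : H)) = c • ((1 : H) ⊗ₜ[ℂ] (1 : H)) := by
      rw [map_smul]
      congr 1
      rw [show Coalgebra.comul (R := ℂ) (1 : H) = (1 : H ⊗[ℂ] H) from Bialgebra.comul_one (R := ℂ) (A := H)]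
      rw [Algebra.TensorProduct.one_def]
    have : Coalgebra.comul (R := ℂ) ((c : ℂ) • (1 : H)) - ((c : ℂ) • (1 : H)) ⊗ₜ[ℂ] (1 : H) -
        (1 : H) ⊗ₜ[ℂ] ((c : ℂ) • (1 : H)) = -(c • ((1 : H) ⊗ₜ[ℂ] (1 : H))) := by
      rw [hc, TensorProduct.smul_tmul', TensorProduct.tmul_smul]
      abel
    rw [this]
    exact neg_mem (Submodule.smul_mem _ _ ⟨⟨1, honeF⟩ ⊗ₜ ⟨1, honeF⟩, by simp⟩)
  · obtain ⟨f, hf, hfsum⟩ := (Submodule.mem_iSup_iff_exists_finsupp _ _).mp (hcomul k y hy)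
    have hfmem : ∀ p : ℕ × ℕ, p.1 + p.2 = k →
        f p ∈ LinearMap.range (TensorProduct.map (ℬ p.1).subtype (ℬ p.2).subtype) := by
      intro p hp; have h := hf p; rwa [iSup_pos hp] at h
    have hfzero : ∀ p : ℕ × ℕ, p.1 + p.2 ≠ k → f p = 0 := by
      intro p hp; have h := hf p; rwa [iSup_neg hp, Submodule.mem_bot] at h
    have hsupp : ∀ p : ℕ × ℕ, p ∈ f.support → p.1 + p.2 = k := by
      intro p hp
      by_contra hne
      exact (Finsupp.mem_support_iff.mp hp) (hfzero p hne)
    -- identify the extreme components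
    have hk0' : f (k, 0) = y ⊗ₜ[ℂ] (1 : H) := by
      obtain ⟨w, hwB, hw⟩ : ∃ w, w ∈ ℬ k ∧ f (k, 0) = w ⊗ₜ[ℂ] (1 : H) := by
        refine range_map_induction (ℬ k) (ℬ 0)
          (P := fun z => ∃ w, w ∈ ℬ k ∧ z = w ⊗ₜ[ℂ] (1 : H)) ⟨0, zero_mem _, by simp⟩
          ?_ ?_ _ (hfmem (k, 0) (by simp))
        · intro a ha b hb
          rw [hconn, Submodule.mem_one] at hb
          obtain ⟨c, rfl⟩ := hb
          refine ⟨c • a, Submodule.smul_mem _ _ ha, ?_⟩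
          rw [Algebra.algebraMap_eq_smul_one, TensorProduct.tmul_smul,
            TensorProduct.smul_tmul']
        · rintro u v ⟨w, hw, rfl⟩ ⟨w', hw', rfl⟩
          exact ⟨w + w', add_mem hw hw', by rw [TensorProduct.add_tmul]⟩
      have hyx : π k (Λ₁ (Coalgebra.comul (R := ℂ) y)) = y := by
        rw [hΛ₁comul]; exact hπ_same k y hy
      rw [← hfsum] at hyx
      rw [Finsupp.sum, map_sum, map_sum] at hyx
      rw [Finset.sum_eq_single (k, 0) ?h0 ?h1] at hyx
      · rw [hw] at hyx ⊢
        rw [hΛ₁tmul] at hyx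
        rw [show Coalgebra.counit (R := ℂ) (1 : H) = 1 from Bialgebra.counit_one (R := ℂ) (A := H),
          one_smul] at hyx
        rw [hπ_same k w hwB] at hyx
        rw [hyx]
      case h0 =>
        intro p hp hpne
        have hpk := hsupp p hp
        have hΛmem : Λ₁ (f p) ∈ ℬ p.1 := hΛ₁mem _ _ _ (hfmem p hpk)
        have hp1 : p.1 ≠ k := by
          intro hp1
          apply hpne
          have : p.2 = 0 := by omega
          exact Prod.ext hp1 this
        exact hπ_ne k p.1 _ hp1 hΛmem
      case h1 =>
        intro hns
        rw [Finsupp.notMem_support_iff.mp hns]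
        simp
    have h0k' : f (0, k) = (1 : H) ⊗ₜ[ℂ] y := by
      obtain ⟨w, hwB, hw⟩ : ∃ w, w ∈ ℬ k ∧ f (0, k) = (1 : H) ⊗ₜ[ℂ] w := by
        refine range_map_induction (ℬ 0) (ℬ k)
          (P := fun z => ∃ w, w ∈ ℬ k ∧ z = (1 : H) ⊗ₜ[ℂ] w) ⟨0, zero_mem _, by simp⟩
          ?_ ?_ _ (hfmem (0, k) (by simp))
        · intro a ha b hb
          rw [hconn, Submodule.mem_one] at ha
          obtain ⟨c, rfl⟩ := ha
          refine ⟨c • b, Submodule.smul_mem _ _ hb, ?_⟩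
          rw [Algebra.algebraMap_eq_smul_one, TensorProduct.tmul_smul,
            TensorProduct.smul_tmul']
        · rintro u v ⟨w, hw, rfl⟩ ⟨w', hw', rfl⟩
          exact ⟨w + w', add_mem hw hw', by rw [TensorProduct.tmul_add]⟩
      have hyx : π k (Λ₂ (Coalgebra.comul (R := ℂ) y)) = y := by
        have : Λ₂ (Coalgebra.comul (R := ℂ) y) = y := by
          rw [hΛ₂def]
          simp only [LinearMap.comp_apply]
          rw [show LinearMap.rTensor H (Coalgebra.counit (R := ℂ))
            (Coalgebra.comul (R := ℂ) y) = (1 : ℂ) ⊗ₜ[ℂ] y from Coalgebra.rTensor_counit_comul y]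
          simp
        rw [this]; exact hπ_same k y hy
      rw [← hfsum] at hyx
      rw [Finsupp.sum, map_sum, map_sum] at hyx
      rw [Finset.sum_eq_single (0, k) ?h0 ?h1] at hyx
      · rw [hw] at hyx ⊢
        rw [hΛ₂tmul] at hyx
        rw [show Coalgebra.counit (R := ℂ) (1 : H) = 1 from Bialgebra.counit_one (R := ℂ) (A := H),
          one_smul] at hyx
        rw [hπ_same k w hwB] at hyx
        rw [hyx]
      case h0 =>
        intro p hp hpne
        have hpk := hsupp p hp
        have hΛmem : Λ₂ (f p) ∈ ℬ p.2 := hΛ₂mem _ _ _ (hfmem p hpk)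
        have hp2 : p.2 ≠ k := by
          intro hp2
          apply hpne
          have : p.1 = 0 := by omega
          exact Prod.ext this hp2
        exact hπ_ne k p.2 _ hp2 hΛmem
      case h1 =>
        intro hns
        rw [Finsupp.notMem_support_iff.mp hns]
        simp
    -- assemble
    set s : Finset (ℕ × ℕ) := insert (k, 0) (insert (0, k) f.support) with hs
    have hsum2 : Coalgebra.comul (R := ℂ) y = ∑ p ∈ s, f p := by
      rw [← hfsum, Finsupp.sum]
      refine Finset.sum_subset ?_ ?_
      · intro p hp
        exact Finset.mem_insert_of_mem (Finset.mem_insert_of_mem hp)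
      · intro p _ hnp
        exact Finsupp.notMem_support_iff.mp hnp
    have hne2 : ((0 : ℕ), k) ≠ ((k : ℕ), (0 : ℕ)) := by
      simp only [ne_eq, Prod.mk.injEq, not_and]
      intro h; omega
    have hks : ((k : ℕ), (0 : ℕ)) ∈ s := Finset.mem_insert_self _ _
    have h0s : ((0 : ℕ), k) ∈ s.erase (k, 0) :=
      Finset.mem_erase.mpr ⟨hne2, Finset.mem_insert_of_mem (Finset.mem_insert_self _ _)⟩
    rw [hsum2, ← Finset.add_sum_erase s f hks, ← Finset.add_sum_erase _ f h0s, hk0', h0k']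
    have hcollapse : y ⊗ₜ[ℂ] (1 : H) + ((1 : H) ⊗ₜ[ℂ] y +
        ∑ p ∈ (s.erase (k, 0)).erase (0, k), f p) - y ⊗ₜ[ℂ] (1 : H) - (1 : H) ⊗ₜ[ℂ] y =
        ∑ p ∈ (s.erase (k, 0)).erase (0, k), f p := by abel
    rw [hcollapse]
    refine Submodule.sum_mem _ fun p hp => ?_
    have hp0k : p ≠ (0, k) := (Finset.mem_erase.mp hp).1
    have hpk0 : p ≠ (k, 0) := (Finset.mem_erase.mp (Finset.mem_erase.mp hp).2).1
    by_cases hpk : p.1 + p.2 = k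
    · have hp1 : p.2 ≠ 0 := by
        intro h
        exact hpk0 (Prod.ext (by omega) h)
      have hp2 : p.1 ≠ 0 := by
        intro h
        exact hp0k (Prod.ext h (by omega))
      have hle1 : p.1 ≤ n := by omega
      have hle2 : p.2 ≤ n := by omega
      exact range_map_mono (hBF p.1 hle1) (hBF p.2 hle2) (hfmem p hpk)
    · rw [hfzero p hpk]
      exact zero_mem _
end Graded

end Birkhoff9



/-- Let `H` be a connected graded commutative Hopf algebra over ℂ, `J ⊆ H`
a Hopf ideal, and `K` a commutative ℂ-algebra with a splitting `K = K₋ ⊕ K₊` as in the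
Birkhoff decomposition.  If a character `γ : H → K` vanishes on `J`, then both
components `γ₋, γ₊` of its Birkhoff decomposition `γ = (γ₋ ∘ S) ⋆ γ₊` also vanish on
`J`; in particular `γ` factors through `H/J` and its Birkhoff decomposition pulls back
from that of `H/J`. -/
theorem birkhoff_components_vanish_on_hopf_ideal
    (H : Type*) [CommRing H] [HopfAlgebra ℂ H]
    (ℬ : ℕ → Submodule ℂ H)
    (hinternal : DirectSum.IsInternal ℬ)
    (hconn : ℬ 0 = (1 : Submodule ℂ H))
    (hmul : ∀ m n : ℕ, ∀ x ∈ ℬ m, ∀ y ∈ ℬ n, x * y ∈ ℬ (m + n))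
    (hcomul : ∀ n : ℕ, ∀ x ∈ ℬ n,
      Coalgebra.comul (R := ℂ) x ∈
        ⨆ (p : ℕ × ℕ) (_ : p.1 + p.2 = n),
          LinearMap.range (TensorProduct.map (ℬ p.1).subtype (ℬ p.2).subtype))
    (J : Ideal H)
    (hJcomul : ∀ x ∈ J, Coalgebra.comul (R := ℂ) x ∈
        LinearMap.range (TensorProduct.map (J.restrictScalars ℂ).subtype
          (LinearMap.id : H →ₗ[ℂ] H)) ⊔
        LinearMap.range (TensorProduct.map (LinearMap.id : H →ₗ[ℂ] H)
          (J.restrictScalars ℂ).subtype))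
    (hJcounit : ∀ x ∈ J, Coalgebra.counit (R := ℂ) x = 0)
    (hJantipode : ∀ x ∈ J, HopfAlgebra.antipode (R := ℂ) x ∈ J)
    (K : Type*) [CommRing K] [Algebra ℂ K]
    (Kneg Kpos : Submodule ℂ K)
    (hsplit : IsCompl Kneg Kpos)
    (hKnegMul : ∀ x ∈ Kneg, ∀ y ∈ Kneg, x * y ∈ Kneg)
    (hKposMul : ∀ x ∈ Kpos, ∀ y ∈ Kpos, x * y ∈ Kpos)
    (hKposOne : (1 : K) ∈ Kpos)
    (γ : H →ₐ[ℂ] K)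
    (hγJ : ∀ x ∈ J, γ x = 0)
    (γm γp : H →ₐ[ℂ] K)
    (hγm : ∀ x : H, γm x - algebraMap ℂ K (Coalgebra.counit (R := ℂ) x) ∈ Kneg)
    (hγp : ∀ x : H, γp x ∈ Kpos)
    (hBirkhoff : ∀ x : H, γ x =
      LinearMap.mul' ℂ K
        (TensorProduct.map (γm.toLinearMap ∘ₗ HopfAlgebra.antipode (R := ℂ))
          γp.toLinearMap (Coalgebra.comul (R := ℂ) x))) :
    ∀ x ∈ J, γm x = 0 ∧ γp x = 0 := by
  classical
  set Φ : H ⊗[ℂ] H →ₗ[ℂ] K :=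
    LinearMap.mul' ℂ K ∘ₗ TensorProduct.map γm.toLinearMap γ.toLinearMap with hΦ
  have hΦtmul : ∀ a b : H, Φ (a ⊗ₜ[ℂ] b) = γm a * γ b := by
    intro a b; simp [hΦ, LinearMap.mul'_apply]
  have hkey : ∀ y : H, γp y = Φ (Coalgebra.comul (R := ℂ) y) := by
    intro y
    rw [Birkhoff9.key_conv γ γm γp hBirkhoff y]
    simp [hΦ]
  have hmain : ∀ n : ℕ, ∀ x : H, x ∈ J → x ∈ (⨆ k, ⨆ (_ : k ≤ n), ℬ k) →
      γm x = 0 ∧ γp x = 0 := by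
    intro n
    induction n with
    | zero =>
      intro x hxJ hxF
      have hx0 : x ∈ ℬ 0 := by
        have hle : (⨆ k, ⨆ (_ : k ≤ 0), ℬ k) ≤ ℬ 0 := by
          refine iSup_le fun k => iSup_le fun hk => ?_
          rw [Nat.le_zero.mp hk]
        exact hle hxF
      rw [hconn, Submodule.mem_one] at hx0
      obtain ⟨c, rfl⟩ := hx0
      have hc : c = 0 := by
        have h := hJcounit _ hxJ
        rw [Algebra.algebraMap_eq_smul_one, map_smul] at h
        rw [show Coalgebra.counit (R := ℂ) (1 : H) = 1 from
          Bialgebra.counit_one (R := ℂ) (A := H)] at h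
        simpa using h
      rw [hc, map_zero]
      simp
    | succ n ih =>
      intro x hxJ hxF
      have hred := Birkhoff9.reduced_comul ℬ hinternal hconn hcomul n x hxF
      have hwJ : Coalgebra.comul (R := ℂ) x - x ⊗ₜ[ℂ] (1 : H) - (1 : H) ⊗ₜ[ℂ] x ∈
          LinearMap.range (TensorProduct.map (J.restrictScalars ℂ).subtype
            (LinearMap.id : H →ₗ[ℂ] H)) ⊔
          LinearMap.range (TensorProduct.map (LinearMap.id : H →ₗ[ℂ] H)
            (J.restrictScalars ℂ).subtype) := by
        have h1 := hJcomul x hxJ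
        have h2 : x ⊗ₜ[ℂ] (1 : H) ∈ LinearMap.range (TensorProduct.map
            (J.restrictScalars ℂ).subtype (LinearMap.id : H →ₗ[ℂ] H)) :=
          ⟨(⟨x, hxJ⟩ : J.restrictScalars ℂ) ⊗ₜ (1 : H), by simp⟩
        have h3 : (1 : H) ⊗ₜ[ℂ] x ∈ LinearMap.range (TensorProduct.map
            (LinearMap.id : H →ₗ[ℂ] H) (J.restrictScalars ℂ).subtype) :=
          ⟨(1 : H) ⊗ₜ (⟨x, hxJ⟩ : J.restrictScalars ℂ), by simp⟩
        exact sub_mem (sub_mem h1 (Submodule.mem_sup_left h2)) (Submodule.mem_sup_right h3)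
      have hinter := Birkhoff9.inter_lemma (J.restrictScalars ℂ)
        (⨆ k, ⨆ (_ : k ≤ n), ℬ k) _ hwJ hred
      have hkill : Φ (Coalgebra.comul (R := ℂ) x - x ⊗ₜ[ℂ] (1 : H) - (1 : H) ⊗ₜ[ℂ] x) = 0 := by
        obtain ⟨z₁, hz₁, z₂, hz₂, hz⟩ := Submodule.mem_sup.mp hinter
        have e₁ : Φ z₁ = 0 := by
          refine Birkhoff9.range_map_induction _ _ (P := fun z => Φ z = 0)
            (map_zero Φ) ?_ ?_ z₁ hz₁
          · intro a ha b hb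
            show Φ (a ⊗ₜ[ℂ] b) = 0
            rw [hΦtmul, (ih a ha.1 ha.2).1, zero_mul]
          · intro u v hu hv
            show Φ (u + v) = 0
            rw [map_add, hu, hv, add_zero]
        have e₂ : Φ z₂ = 0 := by
          refine Birkhoff9.range_map_induction _ _ (P := fun z => Φ z = 0)
            (map_zero Φ) ?_ ?_ z₂ hz₂
          · intro a ha b hb
            show Φ (a ⊗ₜ[ℂ] b) = 0
            rw [hΦtmul, hγJ b hb.1, mul_zero]
          · intro u v hu hv
            show Φ (u + v) = 0
            rw [map_add, hu, hv, add_zero]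
        rw [← hz, map_add, e₁, e₂, add_zero]
      have hcomp : γp x - γm x = 0 := by
        have h2 : Φ (x ⊗ₜ[ℂ] (1 : H)) = γm x := by
          rw [hΦtmul, map_one, mul_one]
        have h3 : Φ ((1 : H) ⊗ₜ[ℂ] x) = 0 := by
          rw [hΦtmul, hγJ x hxJ, mul_zero]
        rw [map_sub, map_sub, ← hkey, h2, h3, sub_zero] at hkill
        exact hkill
      have hpm : γp x = γm x := sub_eq_zero.mp hcomp
      have hγmKneg : γm x ∈ Kneg := by
        have h := hγm x
        rwa [hJcounit x hxJ, map_zero, sub_zero] at h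
      have hzero : γm x = 0 := by
        have hmem : γm x ∈ Kneg ⊓ Kpos := ⟨hγmKneg, hpm ▸ hγp x⟩
        have := hsplit.disjoint.le_bot hmem
        rwa [Submodule.mem_bot] at this
      exact ⟨hzero, by rw [hpm, hzero]⟩
  intro x hxJ
  have hxtop : x ∈ ⨆ i, ℬ i := by
    rw [hinternal.submodule_iSup_eq_top]; trivial
  obtain ⟨f, hf, hfsum⟩ := (Submodule.mem_iSup_iff_exists_finsupp _ _).mp hxtop
  have hxF : x ∈ ⨆ k, ⨆ (_ : k ≤ f.support.sup id), ℬ k := by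
    rw [← hfsum, Finsupp.sum]
    refine Submodule.sum_mem _ fun i hi => ?_
    exact (le_iSup_of_le (f := fun k => ⨆ (_ : k ≤ f.support.sup id), ℬ k) i (le_iSup (fun _ : i ≤ f.support.sup id => ℬ i)
      (Finset.le_sup (f := id) hi))) (hf i)
  exact hmain (f.support.sup id) x hxJ hxF
end
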